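/- arXiv:2605.29147 — 7 statements merged into one kernel-verified Lean document; each statement's English description precedes it below -/
import Mathlib

section
/- Let R be a commutative ℂ-algebra and n ≥ 1, r ≥ 2. Let A₁,…,A_s be consecutive intervals partitioning {1,…,r} and let λ₁,…,λ_s ∈ ℂ be pairwise distinct. Let φ^{(1)} ∈ Mat_{r×r}(ℂ) ⊆ Mat_{r×r}(R) be block diagonal with Jordan block J_{|A_v|}(λ_v) along the interval A_v for each v, and let φ^{(2)},…,φ^{(n)} ∈ Mat_{r×r}(R) be matrices each commuting with φ^{(1)} and pairwise commuting. Then in R[z₁,…,z_r] one has ∑_{h=1}^n I_{φ^{(h)}} = I_{φ^{(1)}} = ⋂_{v=1}^s ( (z_a : a ∉ A_v) + H_{A_v} ), where H_{A_v} is the ideal generated by the binomials z_a z_{b+1} − z_b z_{a+1} for a, a+1, b, b+1 ∈ A_v together with the monomials z_a z_{max A_v} for a ∈ A_v \ {min A_v}. -/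
open MvPolynomial

/-- The variable `z_{k+1}` (0-based index `k`) of `R[z₁,…,z_r]`, or `0` if `k ≥ r`. -/
noncomputable def Zv (R : Type*) [CommRing R] (r k : ℕ) : MvPolynomial (Fin r) R :=
  if h : k < r then X ⟨k, h⟩ else 0

/-- The ideal `I_M` of `R[z₁,…,z_r]` generated by `∑ₖ z_k (M_{jk} z_i − M_{ik} z_j)`
for all pairs `i < j`. -/
noncomputable def higgsIdeal {R : Type*} [CommRing R] {r : ℕ}
    (M : Matrix (Fin r) (Fin r) R) : Ideal (MvPolynomial (Fin r) R) :=
  Ideal.span { p | ∃ i j : Fin r, i < j ∧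
    p = ∑ k : Fin r, X k * (C (M j k) * X i - C (M i k) * X j) }

/-- The (0-based) starting indices of the consecutive intervals of lengths given by `L`. -/
def starts (L : List ℕ) : List ℕ := (List.range L.length).map fun t => (L.take t).sum

/-- The consecutive intervals of lengths given by `L`, encoded as (start, length) pairs. -/
def blocksOf (L : List ℕ) : List (ℕ × ℕ) := (starts L).zip L

/-- The index of the block (interval of the partition determined by `L`) containing `a`. -/
def blockIdx (L : List ℕ) (a : ℕ) : ℕ := ((starts L).filter fun t => decide (t ≤ a)).length - 1

/-- The block-diagonal matrix whose diagonal blocks are the Jordan blocks with eigenvalue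
`lam v` along the `v`-th consecutive interval of the partition of lengths `L`. -/
noncomputable def jordanMulti (R : Type*) [CommRing R] (r : ℕ) (L : List ℕ) (lam : ℕ → R) :
    Matrix (Fin r) (Fin r) R :=
  Matrix.of fun a b =>
    if (a : ℕ) = (b : ℕ) then lam (blockIdx L (a : ℕ))
    else if (b : ℕ) = (a : ℕ) + 1 ∧ (b : ℕ) ∉ starts L then 1 else 0

/-- The ideal `H_A` attached to the interval `q = (start, length)`: binomials
`z_a z_{b+1} − z_b z_{a+1}` for `a, a+1, b, b+1 ∈ A`, together with the monomials
`z_a z_{max A}` for `a ∈ A \ {min A}` (0-based indices). -/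
noncomputable def Hblock (R : Type*) [CommRing R] (r : ℕ) (q : ℕ × ℕ) :
    Ideal (MvPolynomial (Fin r) R) :=
  Ideal.span ({ p | ∃ a b : ℕ, q.1 ≤ a ∧ a + 1 < q.1 + q.2 ∧ q.1 ≤ b ∧ b + 1 < q.1 + q.2 ∧
      p = Zv R r a * Zv R r (b + 1) - Zv R r b * Zv R r (a + 1) } ∪
    { p | ∃ a : ℕ, q.1 < a ∧ a < q.1 + q.2 ∧ p = Zv R r a * Zv R r (q.1 + q.2 - 1) })


namespace Stmt5


def st (L : List ℕ) (v : ℕ) : ℕ := (L.take v).sum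


lemma st_succ {L : List ℕ} {v : ℕ} (h : v < L.length) :
    st L (v+1) = st L v + L[v] := by
  unfold st
  rw [List.take_succ, List.sum_append, List.getElem?_eq_getElem h]
  simp

lemma st_le_succ (L : List ℕ) (v : ℕ) : st L v ≤ st L (v+1) := by
  rcases lt_or_ge v L.length with h | h
  · rw [st_succ h]; omega
  · unfold st
    rw [List.take_of_length_le h, List.take_of_length_le (by omega)]

lemma st_mono (L : List ℕ) : Monotone (st L) := monotone_nat_of_le_succ (st_le_succ L)

lemma st_length (L : List ℕ) : st L L.length = L.sum := by
  simp [st]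

lemma st_lt_succ {L : List ℕ} (hpos : ∀ d ∈ L, 1 ≤ d) {v : ℕ} (h : v < L.length) :
    st L v < st L (v+1) := by
  rw [st_succ h]
  have := hpos L[v] (L.getElem_mem h)
  omega

lemma st_lt_st {L : List ℕ} (hpos : ∀ d ∈ L, 1 ≤ d) {v w : ℕ} (hvw : v < w)
    (hw : w ≤ L.length) : st L v < st L w :=
  lt_of_lt_of_le (st_lt_succ hpos (by omega)) (st_mono L (by omega))

lemma st_le_r {L : List ℕ} {v : ℕ} : st L v ≤ L.sum := by
  rcases le_or_gt v L.length with h | h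
  · calc st L v ≤ st L L.length := st_mono L h
    _ = L.sum := st_length L
  · unfold st; rw [List.take_of_length_le (by omega)]

lemma mem_starts {L : List ℕ} {x : ℕ} :
    x ∈ starts L ↔ ∃ t < L.length, st L t = x := by
  simp only [starts, st, List.mem_map, List.mem_range]

lemma filter_range_le {v n : ℕ} (h : v < n) :
    ((List.range n).filter fun t => decide (t ≤ v)).length = v + 1 := by
  induction n with
  | zero => omega
  | succ n ih =>
    rw [List.range_succ, List.filter_append, List.length_append]
    rcases lt_or_ge v n with h' | h'
    · rw [ih h']
      simp [Nat.not_le.mpr h']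
    · have hv : v = n := by omega
      subst hv
      rw [List.filter_eq_self.mpr]
      · simp
      · intro a ha
        simp only [List.mem_range] at ha
        simp
        omega

lemma blockIdx_eq {L : List ℕ} (hpos : ∀ d ∈ L, 1 ≤ d) {v a : ℕ} (hv : v < L.length)
    (h1 : st L v ≤ a) (h2 : a < st L (v+1)) : blockIdx L a = v := by
  unfold blockIdx starts
  rw [List.filter_map, List.length_map]
  have : ∀ t ∈ List.range L.length,
      ((fun t => decide (t ≤ a)) ∘ fun t => (L.take t).sum) t = decide (t ≤ v) := by
    intro t ht
    simp only [List.mem_range] at ht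
    simp only [Function.comp_apply, decide_eq_decide]
    constructor
    · intro hst
      by_contra hc
      have : st L (v+1) ≤ st L t := st_mono L (by omega)
      have : st L t = (L.take t).sum := rfl
      omega
    · intro htv
      have : st L t ≤ st L v := st_mono L htv
      have : st L t = (L.take t).sum := rfl
      omega
  rw [List.filter_congr this, filter_range_le hv]
  omega

lemma exists_block {L : List ℕ} {a : ℕ} (ha : a < L.sum) :
    ∃ v < L.length, st L v ≤ a ∧ a < st L (v+1) := by
  set P : ℕ → Prop := fun t => st L t ≤ a with hP
  have h0 : P 0 := by simp [hP, st]
  set v := Nat.findGreatest P L.length with hv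
  have hspec : P v := Nat.findGreatest_spec (Nat.zero_le _) h0
  have hvlen : v ≤ L.length := Nat.findGreatest_le _
  have hvlt : v < L.length := by
    rcases eq_or_lt_of_le hvlen with h | h
    · exfalso
      have : st L v = L.sum := by rw [h, st_length]
      simp only [hP] at hspec
      omega
    · exact h
  refine ⟨v, hvlt, hspec, ?_⟩
  by_contra hc
  exact Nat.findGreatest_is_greatest (Nat.lt_succ_self v) (by omega) (by simpa [hP] using hc)

lemma blockIdx_spec {L : List ℕ} (hpos : ∀ d ∈ L, 1 ≤ d) {a : ℕ} (ha : a < L.sum) :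
    blockIdx L a < L.length ∧ st L (blockIdx L a) ≤ a ∧ a < st L (blockIdx L a + 1) := by
  obtain ⟨v, hv, h1, h2⟩ := exists_block ha
  rw [blockIdx_eq hpos hv h1 h2]
  exact ⟨hv, h1, h2⟩

lemma blockIdx_eq_iff {L : List ℕ} (hpos : ∀ d ∈ L, 1 ≤ d) {v a : ℕ} (hv : v < L.length)
    (ha : a < L.sum) : blockIdx L a = v ↔ (st L v ≤ a ∧ a < st L (v+1)) := by
  constructor
  · rintro rfl
    exact (blockIdx_spec hpos ha).2
  · rintro ⟨h1, h2⟩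
    exact blockIdx_eq hpos hv h1 h2

/-- interior of a block is not a start -/
lemma not_mem_starts {L : List ℕ} (hpos : ∀ d ∈ L, 1 ≤ d) {v a : ℕ} (hv : v < L.length)
    (h1 : st L v < a) (h2 : a < st L (v+1)) : a ∉ starts L := by
  rw [mem_starts]
  rintro ⟨t, ht, hst⟩
  rcases le_or_gt t v with h | h
  · have := st_mono L h; omega
  · have := st_mono L (show v + 1 ≤ t by omega); omega

lemma pred_same {L : List ℕ} (hpos : ∀ d ∈ L, 1 ≤ d) {b : ℕ} (hb : b < L.sum)
    (hbs : b ∉ starts L) :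
    1 ≤ b ∧ st L (blockIdx L b) < b ∧ blockIdx L (b-1) = blockIdx L b := by
  obtain ⟨hlt, h1, h2⟩ := blockIdx_spec hpos hb
  have hne : st L (blockIdx L b) ≠ b := by
    intro h
    exact hbs (mem_starts.mpr ⟨blockIdx L b, hlt, h⟩)
  have hb1 : 1 ≤ b := by
    by_contra h
    have : b = 0 := by omega
    subst this
    have : st L 0 = 0 := rfl
    omega
  exact ⟨hb1, by omega, blockIdx_eq hpos hlt (by omega) (by omega)⟩



section Helpers
variable {r : ℕ} {β : Type*} [AddCommMonoid β]

lemma sum_eqval (m : ℕ) (f : Fin r → β) :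
    (∑ k : Fin r, if (k:ℕ) = m then f k else 0) = if h : m < r then f ⟨m, h⟩ else 0 := by
  split
  · next h =>
    rw [Finset.sum_eq_single_of_mem ⟨m, h⟩ (Finset.mem_univ _)]
    · simp
    · intro b _ hb
      rw [if_neg]
      intro hc
      exact hb (Fin.ext hc)
  · next h =>
    apply Finset.sum_eq_zero
    intro k _
    rw [if_neg]
    intro hc
    exact h (hc ▸ k.isLt)

lemma sum_succval (m : ℕ) (f : Fin r → β) :
    (∑ k : Fin r, if (k:ℕ) + 1 = m then f k else 0) =
      if h : m - 1 < r ∧ 1 ≤ m then f ⟨m-1, h.1⟩ else 0 := by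
  split
  · next h =>
    rw [Finset.sum_eq_single_of_mem ⟨m-1, h.1⟩ (Finset.mem_univ _)]
    · rw [if_pos]
      simp only [Fin.val_mk]
      omega
    · intro b _ hb
      rw [if_neg]
      intro hc
      exact hb (Fin.ext (by simp only [Fin.val_mk]; omega))
  · next h =>
    apply Finset.sum_eq_zero
    intro k _
    rw [if_neg]
    intro hc
    have := k.isLt
    omega

end Helpers

section Matrices
variable {R : Type*} [CommRing R] [Algebra ℂ R] {r : ℕ}

/-- The Jordan matrix over `R`. -/
noncomputable def jm (R : Type*) [CommRing R] [Algebra ℂ R] (r : ℕ) (L : List ℕ)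
    (lam : ℕ → ℂ) : Matrix (Fin r) (Fin r) R :=
  (jordanMulti ℂ r L lam).map (algebraMap ℂ R)

/-- Entries of a matrix, extended by zero to all of `ℕ × ℕ`. -/
def Np (N : Matrix (Fin r) (Fin r) R) (a b : ℕ) : R :=
  if h : a < r ∧ b < r then N ⟨a, h.1⟩ ⟨b, h.2⟩ else 0

variable {L : List ℕ} {lam : ℕ → ℂ}

lemma jm_apply (a b : Fin r) :
    jm R r L lam a b = if (a:ℕ) = (b:ℕ) then algebraMap ℂ R (lam (blockIdx L (a:ℕ)))
      else if (b:ℕ) = (a:ℕ) + 1 ∧ (b:ℕ) ∉ starts L then 1 else 0 := by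
  rw [jm, Matrix.map_apply]
  show algebraMap ℂ R (jordanMulti ℂ r L lam a b) = _
  rw [jordanMulti, Matrix.of_apply]
  split_ifs <;> simp

lemma mulM (N : Matrix (Fin r) (Fin r) R) (a b : Fin r) :
    (N * jm R r L lam) a b =
      algebraMap ℂ R (lam (blockIdx L (b:ℕ))) * N a b +
        (if h : (b:ℕ) ∉ starts L ∧ 1 ≤ (b:ℕ) then N a ⟨(b:ℕ)-1, by omega⟩ else 0) := by
  rw [Matrix.mul_apply]
  have step : ∀ k : Fin r, N a k * jm R r L lam k b =
      (if (k:ℕ) = (b:ℕ) then algebraMap ℂ R (lam (blockIdx L (b:ℕ))) * N a k else 0) +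
      (if (k:ℕ) + 1 = (b:ℕ) then (if (b:ℕ) ∉ starts L then N a k else 0) else 0) := by
    intro k
    rw [jm_apply]
    by_cases h1 : (k:ℕ) = (b:ℕ)
    · rw [if_pos h1, if_pos h1, if_neg (by omega), h1, add_zero, mul_comm]
    · rw [if_neg h1, if_neg h1]
      by_cases h2 : (b:ℕ) = (k:ℕ) + 1 ∧ (b:ℕ) ∉ starts L
      · rw [if_pos h2, if_pos (by omega), if_pos h2.2, mul_one, zero_add]
      · rw [if_neg h2, mul_zero, zero_add]
        by_cases h3 : (k:ℕ) + 1 = (b:ℕ)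
        · rw [if_pos h3, if_neg (by tauto)]
        · rw [if_neg h3]
  rw [Finset.sum_congr rfl (fun k _ => step k), Finset.sum_add_distrib,
    sum_eqval (b:ℕ) (fun k => algebraMap ℂ R (lam (blockIdx L (b:ℕ))) * N a k),
    sum_succval (b:ℕ) (fun k => if (b:ℕ) ∉ starts L then N a k else 0),
    dif_pos b.isLt]
  congr 1
  have hblt := b.isLt
  split_ifs <;> first | rfl | omega | tauto

lemma Mmul (N : Matrix (Fin r) (Fin r) R) (a b : Fin r) :
    (jm R r L lam * N) a b =
      algebraMap ℂ R (lam (blockIdx L (a:ℕ))) * N a b +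
        (if h : (a:ℕ)+1 < r ∧ ((a:ℕ)+1) ∉ starts L then N ⟨(a:ℕ)+1, h.1⟩ b else 0) := by
  rw [Matrix.mul_apply]
  have step : ∀ k : Fin r, jm R r L lam a k * N k b =
      (if (k:ℕ) = (a:ℕ) then algebraMap ℂ R (lam (blockIdx L (a:ℕ))) * N k b else 0) +
      (if (k:ℕ) = (a:ℕ) + 1 then (if ((a:ℕ)+1) ∉ starts L then N k b else 0) else 0) := by
    intro k
    rw [jm_apply]
    by_cases h1 : (a:ℕ) = (k:ℕ)
    · rw [if_pos h1, if_pos h1.symm, if_neg (by omega), add_zero]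
    · rw [if_neg h1, if_neg (show ¬ (k:ℕ) = (a:ℕ) from fun hc => h1 hc.symm), zero_add]
      by_cases h2 : (k:ℕ) = (a:ℕ) + 1 ∧ (k:ℕ) ∉ starts L
      · rw [if_pos h2, one_mul, if_pos h2.1, if_pos (by rw [← h2.1]; exact h2.2)]
      · rw [if_neg h2, zero_mul]
        by_cases h3 : (k:ℕ) = (a:ℕ) + 1
        · rw [if_pos h3, if_neg (by rw [← h3]; tauto)]
        · rw [if_neg h3]
  rw [Finset.sum_congr rfl (fun k _ => step k), Finset.sum_add_distrib,
    sum_eqval (a:ℕ) (fun k => algebraMap ℂ R (lam (blockIdx L (a:ℕ))) * N k b),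
    sum_eqval ((a:ℕ)+1) (fun k => if ((a:ℕ)+1) ∉ starts L then N k b else 0),
    dif_pos a.isLt]
  congr 1
  split_ifs <;> first | rfl | omega | tauto

lemma rel {N : Matrix (Fin r) (Fin r) R} (hN : N * jm R r L lam = jm R r L lam * N)
    (hlen : 0 < L.length) {a b : ℕ} (ha : a < r) (hb : b < r) :
    algebraMap ℂ R (lam (blockIdx L b)) * Np N a b +
      (if b ∉ starts L then Np N a (b-1) else 0)
    = algebraMap ℂ R (lam (blockIdx L a)) * Np N a b +
      (if (a+1) ∉ starts L then Np N (a+1) b else 0) := by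
  have h0 : (0:ℕ) ∈ starts L := by
    rw [mem_starts]
    exact ⟨0, hlen, rfl⟩
  have := congrFun (congrFun hN ⟨a, ha⟩) ⟨b, hb⟩
  rw [mulM, Mmul] at this
  have hNp : Np N a b = N ⟨a, ha⟩ ⟨b, hb⟩ := by rw [Np, dif_pos ⟨ha, hb⟩]
  rw [hNp]
  convert this using 2
  · split
    · next h =>
      have hb1 : 1 ≤ b := by
        by_contra hc
        have : b = 0 := by omega
        exact h (this ▸ h0)
      rw [dif_pos ⟨h, hb1⟩, Np, dif_pos ⟨by omega, by omega⟩]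
    · next h => rw [dif_neg (by tauto)]
  · split
    · next h =>
      by_cases h2 : a + 1 < r
      · rw [dif_pos ⟨h2, h⟩, Np, dif_pos ⟨h2, hb⟩]
      · rw [dif_neg (by tauto), Np, dif_neg (by omega)]
    · next h => rw [dif_neg (by tauto)]

end Matrices

section Commutant
variable {R : Type*} [CommRing R] [Algebra ℂ R] {r : ℕ} {L : List ℕ} {lam : ℕ → ℂ}
  {N : Matrix (Fin r) (Fin r) R}

lemma len_pos (hsum : L.sum = r) (hr : 0 < r) : 0 < L.length := by
  rcases L with _ | ⟨d, L'⟩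
  · simp at hsum; omega
  · simp

lemma unit_diff (hdist : ∀ v < L.length, ∀ w < L.length, v ≠ w → lam v ≠ lam w)
    {v w : ℕ} (hv : v < L.length) (hw : w < L.length) (hne : v ≠ w) :
    IsUnit (algebraMap ℂ R (lam v) - algebraMap ℂ R (lam w)) := by
  rw [← map_sub]
  exact (Ne.isUnit (sub_ne_zero.mpr (hdist v hv w hw hne))).map (algebraMap ℂ R)

lemma cross_zero (hpos : ∀ d ∈ L, 1 ≤ d) (hsum : L.sum = r) (hr : 0 < r)
    (hdist : ∀ v < L.length, ∀ w < L.length, v ≠ w → lam v ≠ lam w)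
    (hN : N * jm R r L lam = jm R r L lam * N) :
    ∀ m a b, a < r → b < r → blockIdx L a ≠ blockIdx L b →
      (st L (blockIdx L a + 1) - a) + (b - st L (blockIdx L b)) ≤ m → Np N a b = 0 := by
  have hlen := len_pos hsum hr
  intro m
  induction m using Nat.strong_induction_on with
  | _ m ih =>
  intro a b ha hb hne hm
  obtain ⟨hva, hsta, hsta2⟩ := blockIdx_spec hpos (a := a) (by omega)
  obtain ⟨hvb, hstb, hstb2⟩ := blockIdx_spec hpos (a := b) (by omega)
  have hrel := rel hN hlen ha hb
  have key : (algebraMap ℂ R (lam (blockIdx L a)) - algebraMap ℂ R (lam (blockIdx L b)))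
      * Np N a b =
      (if b ∉ starts L then Np N a (b-1) else 0) -
      (if (a+1) ∉ starts L then Np N (a+1) b else 0) := by
    linear_combination - hrel
  have t1 : (if (a+1) ∉ starts L then Np N (a+1) b else 0) = 0 := by
    split
    · next h =>
      by_cases har : a + 1 < r
      · obtain ⟨h1, h2, h3⟩ := pred_same hpos (b := a+1) (by omega) h
        simp only [Nat.add_sub_cancel] at h3
        have hmeas : st L (blockIdx L (a+1) + 1) - (a+1) + (b - st L (blockIdx L b)) ≤ m - 1 := by
          rw [← h3]
          omega
        exact ih (m-1) (by omega) (a+1) b har hb (by rw [← h3]; exact hne) hmeas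
      · rw [Np, dif_neg (by omega)]
    · rfl
  have t2 : (if b ∉ starts L then Np N a (b-1) else 0) = 0 := by
    split
    · next h =>
      obtain ⟨h1, h2, h3⟩ := pred_same hpos (b := b) (by omega) h
      have hmeas : st L (blockIdx L a + 1) - a + ((b-1) - st L (blockIdx L (b-1))) ≤ m - 1 := by
        rw [h3]
        omega
      exact ih (m-1) (by omega) a (b-1) ha (by omega) (by rw [h3]; exact hne) hmeas
    · rfl
  rw [t1, t2, sub_zero] at key
  exact (IsUnit.mul_right_eq_zero (unit_diff hdist hva hvb hne)).mp key

lemma star_rel (hsum : L.sum = r) (hr : 0 < r)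
    (hN : N * jm R r L lam = jm R r L lam * N)
    {a b : ℕ} (ha : a < r) (hb : b < r) (hsame : blockIdx L a = blockIdx L b) :
    (if b ∉ starts L then Np N a (b-1) else 0) =
      (if (a+1) ∉ starts L then Np N (a+1) b else 0) := by
  have hrel := rel hN (len_pos hsum hr) ha hb
  rw [← hsame] at hrel
  exact add_left_cancel hrel

lemma toeplitz (hpos : ∀ d ∈ L, 1 ≤ d) (hsum : L.sum = r) (hr : 0 < r)
    (hN : N * jm R r L lam = jm R r L lam * N)
    {v a b : ℕ} (hv : v < L.length) (ha1 : st L v ≤ a) (ha2 : a + 1 < st L (v+1))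
    (hb1 : st L v ≤ b) (hb2 : b + 1 < st L (v+1)) : Np N a b = Np N (a+1) (b+1) := by
  have hstr : st L (v+1) ≤ r := by
    calc st L (v+1) ≤ st L L.length := st_mono L (by omega)
    _ = r := by rw [st_length, hsum]
  have hsame : blockIdx L a = blockIdx L (b+1) := by
    rw [blockIdx_eq hpos hv ha1 (by omega), blockIdx_eq hpos hv (by omega) hb2]
  have h := star_rel hsum hr hN (by omega : a < r) (by omega : b + 1 < r) hsame
  rw [if_pos (not_mem_starts hpos hv (by omega) hb2),
    if_pos (not_mem_starts hpos hv (by omega) ha2), Nat.add_sub_cancel] at h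
  exact h

lemma last_row_zero (hpos : ∀ d ∈ L, 1 ≤ d) (hsum : L.sum = r) (hr : 0 < r)
    (hN : N * jm R r L lam = jm R r L lam * N) {v : ℕ} (hv : v < L.length)
    {a b : ℕ} (hb : st L v ≤ b) (hba : b < a) (ha : a + 1 = st L (v+1)) : Np N a b = 0 := by
  have hstr : st L (v+1) ≤ r := by
    calc st L (v+1) ≤ st L L.length := st_mono L (by omega)
    _ = r := by rw [st_length, hsum]
  have hsame : blockIdx L a = blockIdx L (b+1) := by
    rw [blockIdx_eq hpos hv (by omega) (by omega), blockIdx_eq hpos hv (by omega) (by omega)]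
  have h := star_rel hsum hr hN (by omega : a < r) (by omega : b + 1 < r) hsame
  rw [if_pos (not_mem_starts hpos hv (by omega) (by omega)), Nat.add_sub_cancel] at h
  rw [h]
  split
  · next hst =>
    by_cases har : a + 1 < r
    · exfalso
      obtain ⟨hlt', hsp1, hsp2⟩ := blockIdx_spec hpos (a := a+1) (by omega)
      have h3 := (pred_same hpos (b := a+1) (by omega) hst).2.2
      simp only [Nat.add_sub_cancel] at h3
      rw [blockIdx_eq hpos hv (by omega) (by omega)] at h3
      rw [← h3] at hsp2
      omega
    · rw [Np, dif_neg (by omega)]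
  · rfl

lemma lower_zero (hpos : ∀ d ∈ L, 1 ≤ d) (hsum : L.sum = r) (hr : 0 < r)
    (hN : N * jm R r L lam = jm R r L lam * N) {v : ℕ} (hv : v < L.length) :
    ∀ d a b, st L v ≤ b → b < a → a < st L (v+1) → st L (v+1) - (a+1) ≤ d →
      Np N a b = 0 := by
  intro d
  induction d with
  | zero =>
    intro a b hb hba ha hd
    exact last_row_zero hpos hsum hr hN hv hb hba (by omega)
  | succ d ih =>
    intro a b hb hba ha hd
    by_cases hlast : a + 1 < st L (v+1)
    · rw [toeplitz hpos hsum hr hN hv (by omega) hlast hb (by omega)]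
      exact ih (a+1) (b+1) (by omega) (by omega) (by omega) (by omega)
    · exact last_row_zero hpos hsum hr hN hv hb hba (by omega)

lemma nf (hpos : ∀ d ∈ L, 1 ≤ d) (hsum : L.sum = r) (hr : 0 < r)
    (hN : N * jm R r L lam = jm R r L lam * N) {v : ℕ} (hv : v < L.length) :
    ∀ d a b, st L v ≤ a → a ≤ b → b < st L (v+1) → a - st L v ≤ d →
      Np N a b = Np N (st L v) (st L v + (b - a)) := by
  intro d
  induction d with
  | zero =>
    intro a b ha hab hb hd
    have : a = st L v := by omega
    subst this
    congr 1
    omega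
  | succ d ih =>
    intro a b ha hab hb hd
    by_cases h0 : a = st L v
    · subst h0
      congr 1
      omega
    · obtain ⟨a', rfl⟩ : ∃ a', a = a' + 1 := ⟨a - 1, by omega⟩
      obtain ⟨b', rfl⟩ : ∃ b', b = b' + 1 := ⟨b - 1, by omega⟩
      rw [← toeplitz hpos hsum hr hN hv (by omega) (by omega) (by omega) (by omega),
        ih a' b' (by omega) (by omega) (by omega) (by omega)]
      congr 1
      omega

end Commutant

section Ideals
variable (R : Type*) [CommRing R] [Algebra ℂ R] (r : ℕ) (L : List ℕ)

lemma Zv_lt {a : ℕ} (ha : a < r) : Zv R r a = X ⟨a, ha⟩ := dif_pos ha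
lemma Zv_ge {a : ℕ} (ha : r ≤ a) : Zv R r a = 0 := dif_neg (by omega)

/-- The ideal `P_v`: variables outside block `v` together with the `H`-relations of block `v`. -/
noncomputable def Pv (v : ℕ) : Ideal (MvPolynomial (Fin r) R) :=
  Ideal.span
    ({ p | ∃ a : ℕ, a < r ∧ ¬ (st L v ≤ a ∧ a < st L (v+1)) ∧ p = Zv R r a } ∪
     ({ p | ∃ a b : ℕ, st L v ≤ a ∧ a + 1 < st L (v+1) ∧ st L v ≤ b ∧ b + 1 < st L (v+1) ∧
        p = Zv R r a * Zv R r (b+1) - Zv R r b * Zv R r (a+1) } ∪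
      { p | ∃ a : ℕ, st L v < a ∧ a < st L (v+1) ∧ p = Zv R r a * Zv R r (st L (v+1) - 1) }))

lemma Pv_eq {v : ℕ} (hv : v < L.length) :
    Ideal.span { p | ∃ a : ℕ, a < r ∧
        ¬ ((st L v, L[v]).1 ≤ a ∧ a < (st L v, L[v]).1 + (st L v, L[v]).2) ∧ p = Zv R r a } +
      Hblock R r (st L v, L[v]) = Pv R r L v := by
  have key : st L v + L[v] = st L (v+1) := (st_succ hv).symm
  rw [Pv, Ideal.span_union, Submodule.add_eq_sup, Hblock]
  congr 2
  · ext p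
    simp only [Set.mem_setOf_eq, key]
  · ext p
    simp only [Set.mem_union, Set.mem_setOf_eq, key]

variable {R r L}
variable {v : ℕ}

lemma y_out {a : ℕ} (h : ¬ (st L v ≤ a ∧ a < st L (v+1))) :
    Ideal.Quotient.mk (Pv R r L v) (Zv R r a) = 0 := by
  by_cases ha : a < r
  · exact Ideal.Quotient.eq_zero_iff_mem.mpr
      (Ideal.subset_span (Or.inl ⟨a, ha, h, rfl⟩))
  · rw [Zv_ge R r (by omega), map_zero]

lemma y_bin {a b : ℕ} (h1 : st L v ≤ a) (h2 : a + 1 < st L (v+1)) (h3 : st L v ≤ b)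
    (h4 : b + 1 < st L (v+1)) :
    Ideal.Quotient.mk (Pv R r L v) (Zv R r a) * Ideal.Quotient.mk (Pv R r L v) (Zv R r (b+1)) =
    Ideal.Quotient.mk (Pv R r L v) (Zv R r b) * Ideal.Quotient.mk (Pv R r L v) (Zv R r (a+1)) := by
  rw [← map_mul, ← map_mul, ← sub_eq_zero, ← map_sub]
  exact Ideal.Quotient.eq_zero_iff_mem.mpr
    (Ideal.subset_span (Or.inr (Or.inl ⟨a, b, h1, h2, h3, h4, rfl⟩)))

lemma y_mon {a : ℕ} (h1 : st L v < a) (h2 : a < st L (v+1)) :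
    Ideal.Quotient.mk (Pv R r L v) (Zv R r a) *
      Ideal.Quotient.mk (Pv R r L v) (Zv R r (st L (v+1) - 1)) = 0 := by
  rw [← map_mul]
  exact Ideal.Quotient.eq_zero_iff_mem.mpr
    (Ideal.subset_span (Or.inr (Or.inr ⟨a, h1, h2, rfl⟩)))

/-- normal form for quadratic monomials in the quotient by `P_v`. -/
noncomputable def Fq (R : Type*) [CommRing R] [Algebra ℂ R] (r : ℕ) (L : List ℕ) (v m : ℕ) :
    MvPolynomial (Fin r) R ⧸ Pv R r L v :=
  if m + 1 ≤ st L v + st L (v+1) then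
    Ideal.Quotient.mk (Pv R r L v) (Zv R r (st L v) * Zv R r (m - st L v)) else 0

lemma prod_form : ∀ n a b, st L v ≤ a → a < st L (v+1) → st L v ≤ b → b < st L (v+1) →
    a - st L v ≤ n →
    Ideal.Quotient.mk (Pv R r L v) (Zv R r a) * Ideal.Quotient.mk (Pv R r L v) (Zv R r b) =
      Fq R r L v (a + b) := by
  have base : ∀ b, st L v ≤ b → b < st L (v+1) →
      Ideal.Quotient.mk (Pv R r L v) (Zv R r (st L v)) *
        Ideal.Quotient.mk (Pv R r L v) (Zv R r b) = Fq R r L v (st L v + b) := by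
    intro b hb1 hb2
    rw [Fq, if_pos (by omega), map_mul, show st L v + b - st L v = b from by omega]
  intro n
  induction n with
  | zero =>
    intro a b ha1 ha2 hb1 hb2 hn
    have : a = st L v := by omega
    subst this
    exact base b hb1 hb2
  | succ n ih =>
    intro a b ha1 ha2 hb1 hb2 hn
    by_cases h0 : a = st L v
    · subst h0
      exact base b hb1 hb2
    · obtain ⟨a', rfl⟩ : ∃ a', a = a' + 1 := ⟨a - 1, by omega⟩
      by_cases hb : b + 1 < st L (v+1)
      · have step := y_bin (R := R) (r := r) (L := L) (v := v) (a := a') (b := b) (by omega) (by omega) hb1 hb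
        have flip : Ideal.Quotient.mk (Pv R r L v) (Zv R r (a'+1)) *
            Ideal.Quotient.mk (Pv R r L v) (Zv R r b) =
            Ideal.Quotient.mk (Pv R r L v) (Zv R r a') *
            Ideal.Quotient.mk (Pv R r L v) (Zv R r (b+1)) := by
          rw [step]; ring
        rw [flip, ih a' (b+1) (by omega) (by omega) (by omega) (by omega) (by omega)]
        congr 1
        omega
      · have hbeq : b = st L (v+1) - 1 := by omega
        rw [hbeq, y_mon (by omega) (by omega), Fq, if_neg (by omega)]

end Ideals

section KeyA
variable {R : Type*} [CommRing R] [Algebra ℂ R] {r : ℕ} {L : List ℕ} {lam : ℕ → ℂ}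
  {N : Matrix (Fin r) (Fin r) R}

lemma st_succ_le_r (hsum : L.sum = r) {v : ℕ} (hv : v < L.length) : st L (v+1) ≤ r := by
  calc st L (v+1) ≤ st L L.length := st_mono L (by omega)
  _ = r := by rw [st_length, hsum]

lemma sum_eval (hpos : ∀ d ∈ L, 1 ≤ d) (hsum : L.sum = r) (hr : 0 < r)
    (hdist : ∀ v < L.length, ∀ w < L.length, v ≠ w → lam v ≠ lam w)
    (hN : N * jm R r L lam = jm R r L lam * N) {v i j : ℕ} (hv : v < L.length)
    (hi1 : st L v ≤ i) (hi2 : i < st L (v+1)) (hj1 : st L v ≤ j) (hj2 : j < st L (v+1)) :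
    ∑ k ∈ Finset.range r, Ideal.Quotient.mk (Pv R r L v) (C (Np N j k)) * Fq R r L v (i + k) =
    ∑ t ∈ Finset.range r,
      Ideal.Quotient.mk (Pv R r L v) (C (Np N (st L v) (st L v + t))) * Fq R r L v (i + j + t) := by
  have hstr : st L (v+1) ≤ r := st_succ_le_r hsum hv
  have hjr : j < r := by omega
  have hzero : ∀ k, k < j → Np N j k = 0 := by
    intro k hk
    by_cases hkv : st L v ≤ k
    · exact lower_zero hpos hsum hr hN hv (st L (v+1) - (j+1)) j k hkv hk hj2 (le_refl _)
    · have hbj : blockIdx L j = v := blockIdx_eq hpos hv hj1 hj2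
      have hbk := blockIdx_spec hpos (a := k) (show k < L.sum by omega)
      have hne : blockIdx L j ≠ blockIdx L k := by
        intro he
        rw [hbj] at he
        rw [← he] at hbk
        omega
      exact cross_zero hpos hsum hr hdist hN _ j k hjr (by omega) hne (le_refl _)
  calc ∑ k ∈ Finset.range r, Ideal.Quotient.mk (Pv R r L v) (C (Np N j k)) * Fq R r L v (i + k)
      = ∑ k ∈ Finset.Ico j r, Ideal.Quotient.mk (Pv R r L v) (C (Np N j k)) * Fq R r L v (i + k) := by
        refine (Finset.sum_subset (fun x hx => ?_) (fun x hx1 hx2 => ?_)).symm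
        · simp only [Finset.mem_Ico] at hx
          simp only [Finset.mem_range]
          omega
        · have hxj : x < j := by
            simp only [Finset.mem_range] at hx1
            simp only [Finset.mem_Ico] at hx2
            omega
          rw [hzero x hxj, map_zero, map_zero, zero_mul]
    _ = ∑ t ∈ Finset.range (r - j),
          Ideal.Quotient.mk (Pv R r L v) (C (Np N j (j + t))) * Fq R r L v (i + (j + t)) :=
        Finset.sum_Ico_eq_sum_range _ j r
    _ = ∑ t ∈ Finset.range r,
          Ideal.Quotient.mk (Pv R r L v) (C (Np N j (j + t))) * Fq R r L v (i + (j + t)) := by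
        refine Finset.sum_subset (fun x hx => ?_) (fun x hx1 hx2 => ?_)
        · simp only [Finset.mem_range] at hx ⊢
          omega
        · have hxr : r ≤ j + x := by
            simp only [Finset.mem_range] at hx1 hx2
            omega
          rw [show Np N j (j+x) = 0 from dif_neg (by omega), map_zero, map_zero, zero_mul]
    _ = ∑ t ∈ Finset.range r,
          Ideal.Quotient.mk (Pv R r L v) (C (Np N (st L v) (st L v + t))) * Fq R r L v (i + j + t) := by
        refine Finset.sum_congr rfl (fun t ht => ?_)
        by_cases hc : j + t < st L (v+1)
        · rw [nf hpos hsum hr hN hv (j - st L v) j (j+t) hj1 (by omega) hc (le_refl _),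
            show j + t - j = t from by omega, show i + (j + t) = i + j + t from by omega]
        · have hFq : Fq R r L v (i + j + t) = 0 := by
            rw [Fq, if_neg (by omega)]
          have hFq' : Fq R r L v (i + (j + t)) = 0 := by
            rw [Fq, if_neg (by omega)]
          rw [hFq, hFq', mul_zero, mul_zero]

lemma keyA (hpos : ∀ d ∈ L, 1 ≤ d) (hsum : L.sum = r) (hr : 0 < r)
    (hdist : ∀ v < L.length, ∀ w < L.length, v ≠ w → lam v ≠ lam w)
    (hN : N * jm R r L lam = jm R r L lam * N) {v : ℕ} (hv : v < L.length) :
    higgsIdeal N ≤ Pv R r L v := by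
  have hstr : st L (v+1) ≤ r := st_succ_le_r hsum hv
  rw [higgsIdeal, Ideal.span_le]
  rintro p ⟨i, j, hij, rfl⟩
  rw [SetLike.mem_coe, ← Ideal.Quotient.eq_zero_iff_mem, map_sum]
  set π := Ideal.Quotient.mk (Pv R r L v) with hπ
  have hyX : ∀ a : Fin r, π (X a) = π (Zv R r (a:ℕ)) := by
    intro a
    rw [Zv_lt R r a.isLt]
  have hNp : ∀ a k : Fin r, Np N (a:ℕ) (k:ℕ) = N a k := fun a k => dif_pos ⟨a.isLt, k.isLt⟩
  have expand : ∀ k : Fin r, π (X k * (C (N j k) * X i - C (N i k) * X j)) =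
      (π (X k) * π (C (N j k))) * π (X i) - (π (X k) * π (C (N i k))) * π (X j) := by
    intro k
    rw [map_mul, map_sub, map_mul, map_mul]
    ring
  have cross_k : ∀ a k : Fin r, ¬ (st L v ≤ (a:ℕ) ∧ (a:ℕ) < st L (v+1)) →
      (st L v ≤ (k:ℕ) ∧ (k:ℕ) < st L (v+1)) → N a k = 0 := by
    intro a k ha hk
    have hba := blockIdx_spec hpos (a := (a:ℕ)) (show (a:ℕ) < L.sum from by have := a.isLt; omega)
    have hbk : blockIdx L (k:ℕ) = v := blockIdx_eq hpos hv hk.1 hk.2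
    have hne : blockIdx L (a:ℕ) ≠ blockIdx L (k:ℕ) := by
      rw [hbk]
      intro he
      rw [he] at hba
      exact ha ⟨hba.2.1, hba.2.2⟩
    rw [← hNp a k]
    exact cross_zero hpos hsum hr hdist hN _ _ _ a.isLt k.isLt hne (le_refl _)
  by_cases hiv : st L v ≤ (i:ℕ) ∧ (i:ℕ) < st L (v+1) <;>
    by_cases hjv : st L v ≤ (j:ℕ) ∧ (j:ℕ) < st L (v+1)
  · -- both in block v
    have term : ∀ k : Fin r, π (X k * (C (N j k) * X i - C (N i k) * X j)) =
        π (C (Np N (j:ℕ) (k:ℕ))) * Fq R r L v ((i:ℕ) + (k:ℕ)) -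
        π (C (Np N (i:ℕ) (k:ℕ))) * Fq R r L v ((j:ℕ) + (k:ℕ)) := by
      intro k
      by_cases hkv : st L v ≤ (k:ℕ) ∧ (k:ℕ) < st L (v+1)
      · have e1 : π (Zv R r (i:ℕ)) * π (Zv R r (k:ℕ)) = Fq R r L v ((i:ℕ) + (k:ℕ)) :=
          prod_form (i:ℕ) (i:ℕ) (k:ℕ) hiv.1 hiv.2 hkv.1 hkv.2 (by omega)
        have e2 : π (Zv R r (j:ℕ)) * π (Zv R r (k:ℕ)) = Fq R r L v ((j:ℕ) + (k:ℕ)) :=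
          prod_form (j:ℕ) (j:ℕ) (k:ℕ) hjv.1 hjv.2 hkv.1 hkv.2 (by omega)
        rw [expand k, hNp j k, hNp i k, ← e1, ← e2, hyX i, hyX j, hyX k]
        ring
      · have hk0 : π (X k) = 0 := by
          rw [hyX k]
          exact y_out hkv
        have c1 : N j k = 0 := by
          rw [← hNp j k]
          refine cross_zero hpos hsum hr hdist hN _ _ _ j.isLt k.isLt ?_ (le_refl _)
          have hbj : blockIdx L (j:ℕ) = v := blockIdx_eq hpos hv hjv.1 hjv.2
          have hbk := blockIdx_spec hpos (a := (k:ℕ)) (show (k:ℕ) < L.sum from by have := k.isLt; omega)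
          rw [hbj]
          intro he
          rw [← he] at hbk
          exact hkv ⟨hbk.2.1, hbk.2.2⟩
        have c2 : N i k = 0 := by
          rw [← hNp i k]
          refine cross_zero hpos hsum hr hdist hN _ _ _ i.isLt k.isLt ?_ (le_refl _)
          have hbi : blockIdx L (i:ℕ) = v := blockIdx_eq hpos hv hiv.1 hiv.2
          have hbk := blockIdx_spec hpos (a := (k:ℕ)) (show (k:ℕ) < L.sum from by have := k.isLt; omega)
          rw [hbi]
          intro he
          rw [← he] at hbk
          exact hkv ⟨hbk.2.1, hbk.2.2⟩
        rw [expand k, hk0, hNp j k, hNp i k, c1, c2]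
        simp
    rw [Finset.sum_congr rfl (fun k _ => term k), Finset.sum_sub_distrib]
    have s1 := Fin.sum_univ_eq_sum_range
      (fun m => π (C (Np N (j:ℕ) m)) * Fq R r L v ((i:ℕ) + m)) r
    have s2 := Fin.sum_univ_eq_sum_range
      (fun m => π (C (Np N (i:ℕ) m)) * Fq R r L v ((j:ℕ) + m)) r
    rw [s1, s2, sum_eval hpos hsum hr hdist hN hv hiv.1 hiv.2 hjv.1 hjv.2,
      sum_eval hpos hsum hr hdist hN hv hjv.1 hjv.2 hiv.1 hiv.2,
      show (j:ℕ) + (i:ℕ) = (i:ℕ) + (j:ℕ) from by omega, sub_self]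
  · -- i in block, j outside
    refine Finset.sum_eq_zero (fun k _ => ?_)
    rw [expand k]
    by_cases hkv : st L v ≤ (k:ℕ) ∧ (k:ℕ) < st L (v+1)
    · have hj0 : π (X j) = 0 := by rw [hyX j]; exact y_out hjv
      rw [cross_k j k hjv hkv, hj0]
      simp
    · have hk0 : π (X k) = 0 := by rw [hyX k]; exact y_out hkv
      rw [hk0]
      simp
  · -- j in block, i outside
    refine Finset.sum_eq_zero (fun k _ => ?_)
    rw [expand k]
    by_cases hkv : st L v ≤ (k:ℕ) ∧ (k:ℕ) < st L (v+1)
    · have hi0 : π (X i) = 0 := by rw [hyX i]; exact y_out hiv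
      rw [cross_k i k hiv hkv, hi0]
      simp
    · have hk0 : π (X k) = 0 := by rw [hyX k]; exact y_out hkv
      rw [hk0]
      simp
  · -- both outside
    refine Finset.sum_eq_zero (fun k _ => ?_)
    rw [expand k]
    have hi0 : π (X i) = 0 := by rw [hyX i]; exact y_out hiv
    have hj0 : π (X j) = 0 := by rw [hyX j]; exact y_out hjv
    rw [hi0, hj0]
    simp

end KeyA

section KeyC
variable {R : Type*} [CommRing R] [Algebra ℂ R] {r : ℕ} {L : List ℕ} {lam : ℕ → ℂ}

lemma g_eq (i j : Fin r) :
    ∑ k : Fin r, X k * (C ((jm R r L lam) j k) * X i - C ((jm R r L lam) i k) * X j)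
    = (C (algebraMap ℂ R (lam (blockIdx L (j:ℕ)))) -
        C (algebraMap ℂ R (lam (blockIdx L (i:ℕ))))) * (X i * X j)
      + (if h : ((j:ℕ)+1) < r ∧ ((j:ℕ)+1) ∉ starts L then X i * X ⟨(j:ℕ)+1, h.1⟩ else 0)
      - (if h : ((i:ℕ)+1) < r ∧ ((i:ℕ)+1) ∉ starts L then X j * X ⟨(i:ℕ)+1, h.1⟩ else 0) := by
  have row : ∀ a b : Fin r, ∑ k : Fin r, C ((jm R r L lam) a k) * (X k * X b) =
      C (algebraMap ℂ R (lam (blockIdx L (a:ℕ)))) * (X a * X b)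
      + (if h : ((a:ℕ)+1) < r ∧ ((a:ℕ)+1) ∉ starts L then X b * X ⟨(a:ℕ)+1, h.1⟩ else 0) := by
    intro a b
    have step : ∀ k : Fin r, C ((jm R r L lam) a k) * (X k * X b) =
        (if (k:ℕ) = (a:ℕ) then C (algebraMap ℂ R (lam (blockIdx L (a:ℕ)))) * (X a * X b) else 0)
        + (if (k:ℕ) = (a:ℕ)+1 then
            (if ((a:ℕ)+1) ∉ starts L then X k * X b else 0) else 0) := by
      intro k
      rw [jm_apply]
      by_cases h1 : (a:ℕ) = (k:ℕ)
      · have hak : a = k := Fin.ext h1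
        subst hak
        rw [if_pos h1, if_pos h1.symm, if_neg (by omega), add_zero]
      · rw [if_neg h1, if_neg (show ¬ (k:ℕ) = (a:ℕ) from fun hc => h1 hc.symm), zero_add]
        by_cases h2 : (k:ℕ) = (a:ℕ) + 1 ∧ (k:ℕ) ∉ starts L
        · rw [if_pos h2, map_one, one_mul, if_pos h2.1, if_pos (by rw [← h2.1]; exact h2.2)]
        · rw [if_neg h2, map_zero, zero_mul]
          by_cases h3 : (k:ℕ) = (a:ℕ) + 1
          · rw [if_pos h3, if_neg (by rw [← h3]; tauto)]
          · rw [if_neg h3]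
    rw [Finset.sum_congr rfl (fun k _ => step k), Finset.sum_add_distrib,
      sum_eqval (a:ℕ) (fun k => C (algebraMap ℂ R (lam (blockIdx L (a:ℕ)))) * (X a * X b)),
      sum_eqval ((a:ℕ)+1) (fun k => if ((a:ℕ)+1) ∉ starts L then X k * X b else 0),
      dif_pos a.isLt]
    congr 1
    split
    · next h =>
      split
      · next h2 => rw [dif_pos ⟨h, h2⟩, mul_comm]
      · next h2 => rw [dif_neg (by tauto)]
    · next h => rw [dif_neg (by tauto)]
  have expand : ∀ k : Fin r, X k * (C ((jm R r L lam) j k) * X i - C ((jm R r L lam) i k) * X j)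
      = C ((jm R r L lam) j k) * (X k * X i) - C ((jm R r L lam) i k) * (X k * X j) := by
    intro k
    ring
  rw [Finset.sum_congr rfl (fun k _ => expand k), Finset.sum_sub_distrib, row j i, row i j]
  ring

lemma bin_mem' (hpos : ∀ d ∈ L, 1 ≤ d) (hsum : L.sum = r) {v : ℕ} (hv : v < L.length)
    {a b : ℕ} (h1 : st L v ≤ a) (h2 : a + 1 < st L (v+1)) (h3 : st L v ≤ b)
    (h4 : b + 1 < st L (v+1)) (hab : a < b) :
    Zv R r a * Zv R r (b+1) - Zv R r b * Zv R r (a+1) ∈ higgsIdeal (jm R r L lam) := by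
  have hstr : st L (v+1) ≤ r := st_succ_le_r hsum hv
  have hgen : (∑ k : Fin r, X k * (C ((jm R r L lam) (⟨b, by omega⟩ : Fin r) k) * X ⟨a, by omega⟩
      - C ((jm R r L lam) (⟨a, by omega⟩ : Fin r) k) * X ⟨b, by omega⟩)) ∈
      higgsIdeal (jm R r L lam) :=
    Ideal.subset_span ⟨⟨a, by omega⟩, ⟨b, by omega⟩, by simp [Fin.lt_def]; omega, rfl⟩
  rw [g_eq] at hgen
  have hbi : blockIdx L a = v := blockIdx_eq hpos hv h1 (by omega)
  have hbj : blockIdx L b = v := blockIdx_eq hpos hv h3 (by omega)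
  simp only [Fin.val_mk] at hgen
  rw [hbi, hbj, sub_self, zero_mul, zero_add,
    dif_pos ⟨by omega, not_mem_starts hpos hv (by omega) h4⟩,
    dif_pos ⟨by omega, not_mem_starts hpos hv (by omega) h2⟩] at hgen
  have e1 : Zv R r a = (X (⟨a, by omega⟩ : Fin r) : MvPolynomial (Fin r) R) := dif_pos (by omega)
  have e2 : Zv R r (b+1) = (X (⟨b+1, by omega⟩ : Fin r) : MvPolynomial (Fin r) R) := dif_pos (by omega)
  have e3 : Zv R r b = (X (⟨b, by omega⟩ : Fin r) : MvPolynomial (Fin r) R) := dif_pos (by omega)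
  have e4 : Zv R r (a+1) = (X (⟨a+1, by omega⟩ : Fin r) : MvPolynomial (Fin r) R) := dif_pos (by omega)
  rw [e1, e2, e3, e4]
  convert hgen using 2

lemma bin_mem (hpos : ∀ d ∈ L, 1 ≤ d) (hsum : L.sum = r) {v : ℕ} (hv : v < L.length)
    {a b : ℕ} (h1 : st L v ≤ a) (h2 : a + 1 < st L (v+1)) (h3 : st L v ≤ b)
    (h4 : b + 1 < st L (v+1)) :
    Zv R r a * Zv R r (b+1) - Zv R r b * Zv R r (a+1) ∈ higgsIdeal (jm R r L lam) := by
  rcases lt_trichotomy a b with h | h | h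
  · exact bin_mem' hpos hsum hv h1 h2 h3 h4 h
  · subst h
    rw [sub_self]
    exact zero_mem _
  · have := bin_mem' (R := R) (r := r) (L := L) (lam := lam) hpos hsum hv h3 h4 h1 h2 h
    have h' := neg_mem this
    rw [neg_sub] at h'
    exact h'

lemma mon_mem (hpos : ∀ d ∈ L, 1 ≤ d) (hsum : L.sum = r) {v : ℕ} (hv : v < L.length)
    {a : ℕ} (h1 : st L v < a) (h2 : a < st L (v+1)) :
    Zv R r a * Zv R r (st L (v+1) - 1) ∈ higgsIdeal (jm R r L lam) := by
  have hstr : st L (v+1) ≤ r := st_succ_le_r hsum hv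
  have hst1 : st L v < st L (v+1) := st_lt_succ hpos hv
  set M := st L (v+1) - 1 with hM
  have hgen : (∑ k : Fin r, X k * (C ((jm R r L lam) (⟨M, by omega⟩ : Fin r) k) * X ⟨a-1, by omega⟩
      - C ((jm R r L lam) (⟨a-1, by omega⟩ : Fin r) k) * X ⟨M, by omega⟩)) ∈
      higgsIdeal (jm R r L lam) :=
    Ideal.subset_span ⟨⟨a-1, by omega⟩, ⟨M, by omega⟩, by simp [Fin.lt_def]; omega, rfl⟩
  rw [g_eq] at hgen
  simp only [Fin.val_mk] at hgen
  have hbi : blockIdx L (a-1) = v := blockIdx_eq hpos hv (by omega) (by omega)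
  have hbj : blockIdx L M = v := blockIdx_eq hpos hv (by omega) (by omega)
  have hMdite : ¬ (M + 1 < r ∧ (M+1) ∉ starts L) := by
    rintro ⟨hc1, hc2⟩
    have hMe : M + 1 = st L (v+1) := by omega
    have hv1 : v + 1 < L.length := by
      by_contra hc
      have : v + 1 = L.length := by omega
      rw [hMe, this, st_length, hsum] at hc1
      omega
    exact hc2 (hMe ▸ mem_starts.mpr ⟨v+1, hv1, rfl⟩)
  rw [hbi, hbj, sub_self, zero_mul, zero_add, dif_neg hMdite,
    dif_pos ⟨by omega, not_mem_starts hpos hv (by omega) (by omega : a - 1 + 1 < st L (v+1))⟩,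
    zero_sub] at hgen
  have h' := neg_mem hgen
  rw [neg_neg] at h'
  have e1 : Zv R r a = (X (⟨a-1+1, by omega⟩ : Fin r) : MvPolynomial (Fin r) R) := by
    have hfe : (⟨a-1+1, by omega⟩ : Fin r) = ⟨a, by omega⟩ := by
      simp only [Fin.mk.injEq]
      omega
    rw [hfe]
    exact dif_pos (by omega)
  have e2 : Zv R r M = (X (⟨M, by omega⟩ : Fin r) : MvPolynomial (Fin r) R) := dif_pos (by omega)
  rw [e1, e2, mul_comm]
  exact h'

lemma cross_mem' (hpos : ∀ d ∈ L, 1 ≤ d) (hsum : L.sum = r) (hr : 0 < r)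
    (hdist : ∀ v < L.length, ∀ w < L.length, v ≠ w → lam v ≠ lam w) :
    ∀ m (a b : Fin r), (a:ℕ) < (b:ℕ) → blockIdx L (a:ℕ) ≠ blockIdx L (b:ℕ) →
      (st L (blockIdx L (a:ℕ) + 1) - (a:ℕ)) + (st L (blockIdx L (b:ℕ) + 1) - (b:ℕ)) ≤ m →
      X a * X b ∈ higgsIdeal (jm R r L lam) := by
  intro m
  induction m using Nat.strong_induction_on with
  | _ m ih =>
  intro a b hab hne hm
  obtain ⟨hva, hsta, hsta2⟩ := blockIdx_spec hpos (a := (a:ℕ)) (show (a:ℕ) < L.sum from by have := a.isLt; omega)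
  obtain ⟨hvb, hstb, hstb2⟩ := blockIdx_spec hpos (a := (b:ℕ)) (show (b:ℕ) < L.sum from by have := b.isLt; omega)
  have hgen : (∑ k : Fin r, X k * (C ((jm R r L lam) b k) * X a
      - C ((jm R r L lam) a k) * X b)) ∈ higgsIdeal (jm R r L lam) :=
    Ideal.subset_span ⟨a, b, Fin.lt_def.mpr hab, rfl⟩
  have hd1 : (if h : ((b:ℕ)+1) < r ∧ ((b:ℕ)+1) ∉ starts L then
      X a * X ⟨(b:ℕ)+1, h.1⟩ else 0) ∈ higgsIdeal (jm R r L lam) := by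
    split
    · next h =>
      have hps := pred_same hpos (b := (b:ℕ)+1) (by omega) h.2
      simp only [Nat.add_sub_cancel] at hps
      refine ih (m-1) (by omega) a ⟨(b:ℕ)+1, h.1⟩ (by simp; omega) ?_ ?_
      · simp only [Fin.val_mk]
        rw [← hps.2.2]
        exact hne
      · simp only [Fin.val_mk]
        rw [← hps.2.2]
        omega
    · exact zero_mem _
  have hd2 : (if h : ((a:ℕ)+1) < r ∧ ((a:ℕ)+1) ∉ starts L then
      X b * X ⟨(a:ℕ)+1, h.1⟩ else 0) ∈ higgsIdeal (jm R r L lam) := by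
    split
    · next h =>
      have hps := pred_same hpos (b := (a:ℕ)+1) (by omega) h.2
      simp only [Nat.add_sub_cancel] at hps
      have hne' : blockIdx L ((a:ℕ)+1) ≠ blockIdx L (b:ℕ) := by
        rw [← hps.2.2]
        exact hne
      have hlt : (a:ℕ)+1 < (b:ℕ) := by
        rcases Nat.lt_or_ge ((a:ℕ)+1) (b:ℕ) with h' | h'
        · exact h'
        · exfalso
          have : (a:ℕ)+1 = (b:ℕ) := by omega
          rw [this] at hne'
          exact hne' rfl
      rw [mul_comm]
      refine ih (m-1) (by omega) ⟨(a:ℕ)+1, h.1⟩ b (by simp; omega) (by simpa using hne') ?_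
      simp only [Fin.val_mk]
      rw [← hps.2.2]
      omega
    · exact zero_mem _
  have hmem : (C (algebraMap ℂ R (lam (blockIdx L (b:ℕ)))) -
      C (algebraMap ℂ R (lam (blockIdx L (a:ℕ))))) * (X a * X b) ∈ higgsIdeal (jm R r L lam) := by
    have : (C (algebraMap ℂ R (lam (blockIdx L (b:ℕ)))) -
        C (algebraMap ℂ R (lam (blockIdx L (a:ℕ))))) * (X a * X b)
        = (∑ k : Fin r, X k * (C ((jm R r L lam) b k) * X a - C ((jm R r L lam) a k) * X b))
          - (if h : ((b:ℕ)+1) < r ∧ ((b:ℕ)+1) ∉ starts L then X a * X ⟨(b:ℕ)+1, h.1⟩ else 0)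
          + (if h : ((a:ℕ)+1) < r ∧ ((a:ℕ)+1) ∉ starts L then X b * X ⟨(a:ℕ)+1, h.1⟩ else 0) := by
      rw [g_eq]
      ring
    rw [this]
    exact add_mem (sub_mem hgen hd1) hd2
  have hunit : IsUnit (C (algebraMap ℂ R (lam (blockIdx L (b:ℕ)))) -
      C (algebraMap ℂ R (lam (blockIdx L (a:ℕ)))) : MvPolynomial (Fin r) R) := by
    rw [← map_sub]
    exact (unit_diff hdist hvb hva (fun hc => hne hc.symm)).map C
  obtain ⟨u, hu⟩ := hunit
  have := Ideal.mul_mem_left _ (↑u⁻¹ : MvPolynomial (Fin r) R) hmem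
  rwa [← hu, ← mul_assoc, Units.inv_mul, one_mul] at this

lemma cross_mem (hpos : ∀ d ∈ L, 1 ≤ d) (hsum : L.sum = r) (hr : 0 < r)
    (hdist : ∀ v < L.length, ∀ w < L.length, v ≠ w → lam v ≠ lam w)
    {a b : Fin r} (hne : blockIdx L (a:ℕ) ≠ blockIdx L (b:ℕ)) :
    X a * X b ∈ higgsIdeal (jm R r L lam) := by
  rcases Nat.lt_or_ge (a:ℕ) (b:ℕ) with h | h
  · exact cross_mem' hpos hsum hr hdist _ a b h hne (le_refl _)
  · have hba : (b:ℕ) < (a:ℕ) := by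
      rcases Nat.lt_or_ge (b:ℕ) (a:ℕ) with h' | h'
      · exact h'
      · exfalso
        have : (a:ℕ) = (b:ℕ) := by omega
        rw [this] at hne
        exact hne rfl
    rw [mul_comm]
    exact cross_mem' hpos hsum hr hdist _ b a hba (fun hc => hne hc.symm) (le_refl _)

end KeyC

section KeyB
variable {R : Type*} [CommRing R] [Algebra ℂ R] {r : ℕ} {L : List ℕ} {lam : ℕ → ℂ}

/-- The ideal generated by cross-block quadratic monomials and all the `H`-relations. -/
noncomputable def JJ (R : Type*) [CommRing R] [Algebra ℂ R] (r : ℕ) (L : List ℕ) :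
    Ideal (MvPolynomial (Fin r) R) :=
  Ideal.span
    ({ p | ∃ a b : Fin r, blockIdx L (a:ℕ) ≠ blockIdx L (b:ℕ) ∧ p = X a * X b } ∪
     { p | ∃ v, v < L.length ∧
        ((∃ a b : ℕ, st L v ≤ a ∧ a + 1 < st L (v+1) ∧ st L v ≤ b ∧ b + 1 < st L (v+1) ∧
          p = Zv R r a * Zv R r (b+1) - Zv R r b * Zv R r (a+1)) ∨
         (∃ a : ℕ, st L v < a ∧ a < st L (v+1) ∧ p = Zv R r a * Zv R r (st L (v+1) - 1))) })

lemma key3 (hpos : ∀ d ∈ L, 1 ≤ d) (hsum : L.sum = r) (hr : 0 < r)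
    (hdist : ∀ v < L.length, ∀ w < L.length, v ≠ w → lam v ≠ lam w) :
    JJ R r L ≤ higgsIdeal (jm R r L lam) := by
  rw [JJ, Ideal.span_le]
  rintro p (⟨a, b, hne, rfl⟩ | ⟨v, hv, ⟨a, b, h1, h2, h3, h4, rfl⟩ | ⟨a, h1, h2, rfl⟩⟩)
  · exact cross_mem hpos hsum hr hdist hne
  · exact bin_mem hpos hsum hv h1 h2 h3 h4
  · exact mon_mem hpos hsum hv h1 h2

/-- The retraction onto the variables of block `v`. -/
noncomputable def sg (R : Type*) [CommRing R] [Algebra ℂ R] (r : ℕ) (L : List ℕ) (v : ℕ) :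
    MvPolynomial (Fin r) R →ₐ[R] MvPolynomial (Fin r) R :=
  aeval (fun k : Fin r => if blockIdx L (k:ℕ) = v then X k else 0)

lemma sg_X_of {v : ℕ} {k : Fin r} (h : blockIdx L (k:ℕ) = v) : sg R r L v (X k) = X k := by
  rw [sg, aeval_X, if_pos h]

lemma sg_X_not {v : ℕ} {k : Fin r} (h : blockIdx L (k:ℕ) ≠ v) : sg R r L v (X k) = 0 := by
  rw [sg, aeval_X, if_neg h]

lemma sg_mono_of {v : ℕ} {u : Fin r →₀ ℕ} {c : R}
    (h : ∀ k ∈ u.support, blockIdx L (k:ℕ) = v) :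
    sg R r L v (monomial u c) = monomial u c := by
  rw [sg, aeval_monomial]
  have : (u.prod fun i k => (if blockIdx L (i:ℕ) = v then (X i : MvPolynomial (Fin r) R)
      else 0) ^ k) = u.prod fun i k => (X i) ^ k := by
    apply Finsupp.prod_congr
    intro i hi
    rw [if_pos (h i hi)]
  rw [this, monomial_eq, algebraMap_eq]

lemma sg_mono_not {v : ℕ} {u : Fin r →₀ ℕ} {c : R} {k₀ : Fin r} (hk₀ : k₀ ∈ u.support)
    (h : blockIdx L (k₀:ℕ) ≠ v) :
    sg R r L v (monomial u c) = 0 := by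
  rw [sg, aeval_monomial, Finsupp.prod]
  rw [Finset.prod_eq_zero hk₀ (by rw [if_neg h, zero_pow (Finsupp.mem_support_iff.mp hk₀)]),
    mul_zero]

lemma cc_gen_zero {v : ℕ} {p : MvPolynomial (Fin r) R} (hp :
    p ∈ ({ p | ∃ a : ℕ, a < r ∧ ¬ (st L v ≤ a ∧ a < st L (v+1)) ∧ p = Zv R r a } ∪
     ({ p | ∃ a b : ℕ, st L v ≤ a ∧ a + 1 < st L (v+1) ∧ st L v ≤ b ∧ b + 1 < st L (v+1) ∧
        p = Zv R r a * Zv R r (b+1) - Zv R r b * Zv R r (a+1) } ∪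
      { p | ∃ a : ℕ, st L v < a ∧ a < st L (v+1) ∧
        p = Zv R r a * Zv R r (st L (v+1) - 1) }) : Set (MvPolynomial (Fin r) R))) :
    constantCoeff p = 0 := by
  have hZ : ∀ a : ℕ, constantCoeff (Zv R r a : MvPolynomial (Fin r) R) = 0 := by
    intro a
    by_cases h : a < r
    · rw [show Zv R r a = (X ⟨a, h⟩ : MvPolynomial (Fin r) R) from dif_pos h, constantCoeff_X]
    · rw [show Zv R r a = (0 : MvPolynomial (Fin r) R) from dif_neg h, map_zero]
  rcases hp with ⟨a, _, _, rfl⟩ | ⟨a, b, _, _, _, _, rfl⟩ | ⟨a, _, _, rfl⟩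
  · exact hZ a
  · simp [hZ]
  · simp [hZ]

lemma cc_Pv {v : ℕ} {f : MvPolynomial (Fin r) R} (hf : f ∈ Pv R r L v) :
    constantCoeff f = 0 := by
  have h1 : constantCoeff f ∈ Ideal.map (constantCoeff (σ := Fin r) (R := R)) (Pv R r L v) :=
    Ideal.mem_map_of_mem _ hf
  rw [Pv, Ideal.map_span] at h1
  refine (Ideal.mem_bot).mp (Ideal.span_le.mpr ?_ h1)
  rintro x ⟨p, hp, rfl⟩
  simp only [SetLike.mem_coe, Ideal.mem_bot]
  exact cc_gen_zero hp

lemma sigma_Pv (hpos : ∀ d ∈ L, 1 ≤ d) (hsum : L.sum = r) {v : ℕ} (hv : v < L.length)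
    {f : MvPolynomial (Fin r) R} (hf : f ∈ Pv R r L v) : sg R r L v f ∈ JJ R r L := by
  have hstr : st L (v+1) ≤ r := st_succ_le_r hsum hv
  have h1 : sg R r L v f ∈ Ideal.map (sg R r L v) (Pv R r L v) :=
    Ideal.mem_map_of_mem _ hf
  rw [Pv, Ideal.map_span] at h1
  refine Ideal.span_le.mpr ?_ h1
  rintro x ⟨p, hp, rfl⟩
  have hsgZ : ∀ a : ℕ, st L v ≤ a → a < st L (v+1) →
      sg R r L v (Zv R r a) = Zv R r a := by
    intro a ha1 ha2
    have har : a < r := by omega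
    have : Zv R r a = (X (⟨a, har⟩ : Fin r) : MvPolynomial (Fin r) R) := dif_pos har
    rw [this, sg_X_of]
    exact blockIdx_eq hpos hv ha1 ha2
  rcases hp with ⟨a, har, hout, rfl⟩ | ⟨a, b, h1', h2', h3', h4', rfl⟩ | ⟨a, h1', h2', rfl⟩
  · have : Zv R r a = (X (⟨a, har⟩ : Fin r) : MvPolynomial (Fin r) R) := dif_pos har
    rw [this, sg_X_not]
    · exact zero_mem _
    · intro hc
      obtain ⟨_, hsp1, hsp2⟩ := blockIdx_spec hpos (a := a) (show a < L.sum by omega)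
      rw [hc] at hsp1 hsp2
      exact hout ⟨hsp1, hsp2⟩
  · rw [map_sub, map_mul, map_mul, hsgZ a h1' (by omega), hsgZ (b+1) (by omega) h4',
      hsgZ b h3' (by omega), hsgZ (a+1) (by omega) h2']
    exact Ideal.subset_span (Or.inr ⟨v, hv, Or.inl ⟨a, b, h1', h2', h3', h4', rfl⟩⟩)
  · have hst1 : st L v < st L (v+1) := st_lt_succ hpos hv
    rw [map_mul, hsgZ a (by omega) h2', hsgZ (st L (v+1) - 1) (by omega) (by omega)]
    exact Ideal.subset_span (Or.inr ⟨v, hv, Or.inr ⟨a, h1', h2', rfl⟩⟩)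

lemma decomp (hpos : ∀ d ∈ L, 1 ≤ d) (hsum : L.sum = r) (hr : 0 < r)
    (f : MvPolynomial (Fin r) R) :
    f + (L.length - 1) • C (constantCoeff f) - ∑ w ∈ Finset.range L.length, sg R r L w f
      ∈ JJ R r L := by
  have hlen : 0 < L.length := len_pos hsum hr
  induction f using MvPolynomial.induction_on' with
  | add p q hp hq =>
    have : (p + q) + (L.length - 1) • C (constantCoeff (p + q)) -
        ∑ w ∈ Finset.range L.length, sg R r L w (p + q) =
        (p + (L.length - 1) • C (constantCoeff p) - ∑ w ∈ Finset.range L.length, sg R r L w p)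
        + (q + (L.length - 1) • C (constantCoeff q) -
          ∑ w ∈ Finset.range L.length, sg R r L w q) := by
      simp only [map_add, smul_add, Finset.sum_add_distrib]
      abel
    rw [this]
    exact add_mem hp hq
  | monomial u c =>
    by_cases hu : u = 0
    · subst hu
      have hccm : constantCoeff (monomial (0 : Fin r →₀ ℕ) c) = c := by
        rw [constantCoeff_monomial, if_pos rfl]
      have hCm : (monomial (0 : Fin r →₀ ℕ) c : MvPolynomial (Fin r) R) = C c := rfl
      have hsg : ∀ w, sg R r L w (C c : MvPolynomial (Fin r) R) = C c := fun w => aeval_C _ _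
      rw [hccm, hCm, Finset.sum_congr rfl (fun w _ => hsg w), Finset.sum_const,
        Finset.card_range]
      have hm : L.length • (C c : MvPolynomial (Fin r) R) = (L.length - 1) • C c + C c := by
        conv_lhs => rw [show L.length = (L.length - 1) + 1 from by omega]
        rw [succ_nsmul]
      rw [hm]
      have : (C c : MvPolynomial (Fin r) R) + (L.length - 1) • C c -
          ((L.length - 1) • C c + C c) = 0 := by abel
      rw [this]
      exact zero_mem _
    · obtain ⟨k₀, hk₀⟩ := Finsupp.support_nonempty_iff.mpr hu
      have hccm : constantCoeff (monomial u c : MvPolynomial (Fin r) R) = 0 := by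
        rw [constantCoeff_monomial, if_neg hu]
      rw [hccm, map_zero, smul_zero, add_zero]
      by_cases hall : ∀ k ∈ u.support, blockIdx L (k:ℕ) = blockIdx L (k₀:ℕ)
      · have hv0 : blockIdx L (k₀:ℕ) < L.length :=
          (blockIdx_spec hpos (a := (k₀:ℕ)) (show (k₀:ℕ) < L.sum from by
            have := k₀.isLt; omega)).1
        have hsum' : ∑ w ∈ Finset.range L.length, sg R r L w (monomial u c) =
            monomial u c := by
          rw [Finset.sum_eq_single_of_mem (blockIdx L (k₀:ℕ)) (Finset.mem_range.mpr hv0)]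
          · exact sg_mono_of hall
          · intro w _ hw
            exact sg_mono_not hk₀ (fun hc => hw hc.symm)
        rw [hsum', sub_self]
        exact zero_mem _
      · push_neg at hall
        obtain ⟨k₁, hk₁, hne⟩ := hall
        have hsum' : ∑ w ∈ Finset.range L.length, sg R r L w (monomial u c) = 0 := by
          refine Finset.sum_eq_zero (fun w _ => ?_)
          by_cases hw : blockIdx L (k₀:ℕ) = w
          · exact sg_mono_not hk₁ (fun hc => hne (hc.trans hw.symm))
          · exact sg_mono_not hk₀ hw
        rw [hsum', sub_zero]
        have hkne : k₀ ≠ k₁ := fun hc => hne (by rw [hc])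
        have hsplit : (monomial u c : MvPolynomial (Fin r) R) =
            (X k₀ * X k₁) * monomial (u - Finsupp.single k₀ 1 - Finsupp.single k₁ 1) c := by
          have h0 : u k₀ ≠ 0 := Finsupp.mem_support_iff.mp hk₀
          have h1 : u k₁ ≠ 0 := Finsupp.mem_support_iff.mp hk₁
          have hu : u = Finsupp.single k₀ 1 + Finsupp.single k₁ 1 +
              (u - Finsupp.single k₀ 1 - Finsupp.single k₁ 1) := by
            ext x
            simp only [Finsupp.add_apply, Finsupp.tsub_apply, Finsupp.single_apply]
            by_cases hx0 : x = k₀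
            · subst hx0
              rw [if_pos rfl, if_neg (fun hc => hkne hc.symm)]
              omega
            · by_cases hx1 : x = k₁
              · subst hx1
                rw [if_neg hkne, if_pos rfl]
                omega
              · rw [if_neg (fun hc => hx0 hc.symm), if_neg (fun hc => hx1 hc.symm)]
                omega
          rw [X, X, monomial_mul, monomial_mul, one_mul, one_mul, ← hu]
        rw [hsplit]
        exact Ideal.mul_mem_right _ _
          (Ideal.subset_span (Or.inl ⟨k₀, k₁, fun hc => hne hc.symm, rfl⟩))

lemma key2 (hpos : ∀ d ∈ L, 1 ≤ d) (hsum : L.sum = r) (hr : 0 < r)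
    {f : MvPolynomial (Fin r) R} (hf : ∀ v < L.length, f ∈ Pv R r L v) : f ∈ JJ R r L := by
  have hlen : 0 < L.length := len_pos hsum hr
  have hcc : constantCoeff f = 0 := cc_Pv (hf 0 hlen)
  have hdec := decomp hpos hsum hr f
  rw [hcc, map_zero, smul_zero, add_zero] at hdec
  have hσ : ∀ w ∈ Finset.range L.length, sg R r L w f ∈ JJ R r L := fun w hw =>
    sigma_Pv hpos hsum (Finset.mem_range.mp hw) (hf w (Finset.mem_range.mp hw))
  have : f = (f - ∑ w ∈ Finset.range L.length, sg R r L w f) +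
      ∑ w ∈ Finset.range L.length, sg R r L w f := by ring
  rw [this]
  exact add_mem hdec (Ideal.sum_mem _ hσ)

end KeyB

lemma length_starts (L : List ℕ) : (starts L).length = L.length := by
  simp [starts]

lemma mem_blocksOf {L : List ℕ} {q : ℕ × ℕ} :
    q ∈ blocksOf L ↔ ∃ v, ∃ _ : v < L.length, q = (st L v, L[v]) := by
  rw [blocksOf, List.mem_iff_getElem]
  have hlen : ((starts L).zip L).length = L.length := by
    rw [List.length_zip, length_starts]
    omega
  constructor
  · rintro ⟨i, hi, rfl⟩
    rw [hlen] at hi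
    refine ⟨i, hi, ?_⟩
    rw [List.getElem_zip]
    congr 1
    simp [starts, st]
  · rintro ⟨v, hv, rfl⟩
    refine ⟨v, by omega, ?_⟩
    rw [List.getElem_zip]
    congr 1
    simp [starts, st]

lemma sum_ideal_le {A : Type*} [CommRing A] {ι : Type*} (s : Finset ι) (I : ι → Ideal A)
    (K : Ideal A) (h : ∀ i ∈ s, I i ≤ K) : (∑ i ∈ s, I i) ≤ K := by
  classical
  induction s using Finset.induction_on with
  | empty =>
    rw [Finset.sum_empty]
    exact bot_le
  | insert a s' hx ih =>
    rw [Finset.sum_insert hx, Submodule.add_eq_sup]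
    exact sup_le (h a (Finset.mem_insert_self _ _))
      (ih fun i hi => h i (Finset.mem_insert_of_mem hi))

lemma le_sum_ideal {A : Type*} [CommRing A] {ι : Type*} [Fintype ι] [DecidableEq ι]
    (I : ι → Ideal A) (j : ι) : I j ≤ ∑ i, I i := by
  rw [← Finset.sum_erase_add Finset.univ I (Finset.mem_univ j), Submodule.add_eq_sup]
  exact le_sup_right

end Stmt5

/-- Theorem 4.6 (ideal-theoretic form): if the first of a family of pairwise commuting
matrices over a commutative `ℂ`-algebra `R` is a Jordan matrix with pairwise distinct
eigenvalues (with complex entries), then `∑ₕ I_{φ⁽ʰ⁾} = I_{φ⁽¹⁾}` and this ideal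
decomposes as the intersection over the blocks `A` of `(z_a : a ∉ A) + H_A`. -/
theorem stmt5 (R : Type*) [CommRing R] [Algebra ℂ R] (n r s : ℕ) (hn : 1 ≤ n) (hr : 2 ≤ r)
    (L : List ℕ) (hLlen : L.length = s) (hLpos : ∀ d ∈ L, 1 ≤ d) (hLsum : L.sum = r)
    (lam : ℕ → ℂ) (hdist : ∀ v < s, ∀ w < s, v ≠ w → lam v ≠ lam w)
    (φ : Fin n → Matrix (Fin r) (Fin r) R)
    (hφ1 : φ ⟨0, hn⟩ = (jordanMulti ℂ r L lam).map (algebraMap ℂ R))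
    (hcomm : ∀ h h', Commute (φ h) (φ h')) :
    (∑ h, higgsIdeal (φ h)) = higgsIdeal (φ ⟨0, hn⟩) ∧
    higgsIdeal (φ ⟨0, hn⟩) =
      ⨅ q ∈ blocksOf L,
        (Ideal.span { p | ∃ a : ℕ, a < r ∧ ¬ (q.1 ≤ a ∧ a < q.1 + q.2) ∧ p = Zv R r a } +
          Hblock R r q) := by
  subst hLlen
  have hr0 : 0 < r := by omega
  have hM : φ ⟨0, hn⟩ = Stmt5.jm R r L lam := hφ1
  have hcom : ∀ h, (φ h) * Stmt5.jm R r L lam = Stmt5.jm R r L lam * (φ h) := by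
    intro h
    rw [← hM]
    exact hcomm h ⟨0, hn⟩
  have hsub2 : ∀ x, (∀ v < L.length, x ∈ Stmt5.Pv R r L v) →
      x ∈ higgsIdeal (Stmt5.jm R r L lam) := fun x hx =>
    Stmt5.key3 hLpos hLsum hr0 hdist (Stmt5.key2 hLpos hLsum hr0 hx)
  have hmem : ∀ x : MvPolynomial (Fin r) R,
      (x ∈ ⨅ q ∈ blocksOf L,
        (Ideal.span { p | ∃ a : ℕ, a < r ∧ ¬ (q.1 ≤ a ∧ a < q.1 + q.2) ∧ p = Zv R r a } +
          Hblock R r q)) ↔ ∀ v < L.length, x ∈ Stmt5.Pv R r L v := by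
    intro x
    simp only [Ideal.mem_iInf]
    constructor
    · intro hx v hv
      rw [← Stmt5.Pv_eq R r L hv]
      exact hx (Stmt5.st L v, L[v]) (Stmt5.mem_blocksOf.mpr ⟨v, hv, rfl⟩)
    · intro hx q hq
      obtain ⟨v, hv, rfl⟩ := Stmt5.mem_blocksOf.mp hq
      rw [Stmt5.Pv_eq R r L hv]
      exact hx v hv
  have hIeq : ∀ x, x ∈ higgsIdeal (Stmt5.jm R r L lam) ↔ ∀ v < L.length, x ∈ Stmt5.Pv R r L v :=
    fun x => ⟨fun hx v hv => Stmt5.keyA hLpos hLsum hr0 hdist rfl hv hx, hsub2 x⟩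
  constructor
  · apply le_antisymm
    · apply Stmt5.sum_ideal_le
      intro h _
      intro x hx
      rw [hM]
      exact hsub2 x (fun v hv => Stmt5.keyA hLpos hLsum hr0 hdist (hcom h) hv hx)
    · exact Stmt5.le_sum_ideal (fun h => higgsIdeal (φ h)) ⟨0, hn⟩
  · rw [hM]
    exact SetLike.ext (fun x => (hIeq x).trans (hmem x).symm)
end

section
/- Let r ≥ 1, λ ∈ ℂ, let J = J_r(λ) ∈ Mat_{r×r}(ℂ) be the Jordan block with eigenvalue λ, let p ∈ ℂ[t], and set T = p(J). If p'(λ) ≠ 0 (where p' is the formal derivative of p), then T is similar to the single Jordan block J_r(p(λ)): there is an invertible matrix P ∈ GL_r(ℂ) with T = P · J_r(p(λ)) · P⁻¹. Equivalently, the matrix T − p(λ)·1 has rank r − 1. -/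
/-- The `r×r` Jordan block with eigenvalue `lam`. -/
def jordanBlock (R : Type*) [CommRing R] (r : ℕ) (lam : R) : Matrix (Fin r) (Fin r) R :=
  Matrix.of fun i j => if (i : ℕ) = (j : ℕ) then lam
    else if (j : ℕ) = (i : ℕ) + 1 then 1 else 0

namespace Stmt7

open Polynomial Matrix Finset

variable {r : ℕ}

noncomputable def NN (r : ℕ) : Matrix (Fin r) (Fin r) ℂ := jordanBlock ℂ r 0

lemma NN_apply (i j : Fin r) : NN r i j = if (j:ℕ) = (i:ℕ)+1 then 1 else 0 := by
  show (if (i : ℕ) = (j : ℕ) then (0:ℂ) else if (j:ℕ) = (i:ℕ)+1 then 1 else 0) = _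
  rcases eq_or_ne (i:ℕ) (j:ℕ) with h | h
  · rw [if_pos h, if_neg (by omega : ¬ (j:ℕ) = (i:ℕ)+1)]
  · rw [if_neg h]

lemma jordan_eq (lam : ℂ) : jordanBlock ℂ r lam = lam • (1 : Matrix (Fin r) (Fin r) ℂ) + NN r := by
  ext i j
  show (if (i : ℕ) = (j : ℕ) then lam else if (j:ℕ) = (i:ℕ)+1 then 1 else 0)
    = (lam • (1 : Matrix (Fin r) (Fin r) ℂ)) i j + NN r i j
  rw [NN_apply, Matrix.smul_apply, Matrix.one_apply]
  rcases eq_or_ne (i:ℕ) (j:ℕ) with h | h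
  · rw [if_pos h, if_pos (Fin.ext h), if_neg (by omega : ¬ (j:ℕ) = (i:ℕ)+1)]
    simp
  · rw [if_neg h, if_neg (fun e => h (congrArg Fin.val e))]
    simp

def UT (A : Matrix (Fin r) (Fin r) ℂ) : Prop := ∀ i j : Fin r, (j:ℕ) < (i:ℕ) → A i j = 0

lemma UT_one : UT (1 : Matrix (Fin r) (Fin r) ℂ) := by
  intro i j h
  exact Matrix.one_apply_ne (fun e => by rw [e] at h; omega)

lemma UT_NN : UT (NN r) := by
  intro i j h
  rw [NN_apply, if_neg (by omega)]

lemma UT_add {A B : Matrix (Fin r) (Fin r) ℂ} (hA : UT A) (hB : UT B) : UT (A + B) := by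
  intro i j h; rw [Matrix.add_apply, hA i j h, hB i j h, add_zero]

lemma UT_smul (a : ℂ) {A : Matrix (Fin r) (Fin r) ℂ} (hA : UT A) : UT (a • A) := by
  intro i j h; rw [Matrix.smul_apply, hA i j h, smul_zero]

lemma UT_mul {A B : Matrix (Fin r) (Fin r) ℂ} (hA : UT A) (hB : UT B) : UT (A * B) := by
  intro i j h
  rw [Matrix.mul_apply]
  apply Finset.sum_eq_zero
  intro l _
  rcases lt_or_ge (l:ℕ) (i:ℕ) with hl | hl
  · rw [hA i l hl, zero_mul]
  · rw [hB l j (lt_of_lt_of_le h hl), mul_zero]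

lemma UT_pow {A : Matrix (Fin r) (Fin r) ℂ} (hA : UT A) (n : ℕ) : UT (A ^ n) := by
  induction n with
  | zero => rw [pow_zero]; exact UT_one
  | succ n ih => rw [pow_succ]; exact UT_mul ih hA

lemma UT_aeval (s : Polynomial ℂ) : UT (Polynomial.aeval (NN r) s) := by
  induction s using Polynomial.induction_on' with
  | add p q hp hq => rw [map_add]; exact UT_add hp hq
  | monomial n a =>
      rw [aeval_monomial, Algebra.algebraMap_eq_smul_one]
      exact UT_mul (UT_smul a UT_one) (UT_pow UT_NN n)

lemma NN_mul_UT {V : Matrix (Fin r) (Fin r) ℂ} (hV : UT V) {a j : Fin r}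
    (h : (j:ℕ) ≤ (a:ℕ)) : (NN r * V) a j = 0 := by
  rw [Matrix.mul_apply]
  apply Finset.sum_eq_zero
  intro l _
  rw [NN_apply]
  split_ifs with hl
  · rw [one_mul]; exact hV l j (by omega)
  · rw [zero_mul]

section SJ

variable {A : Matrix (Fin r) (Fin r) ℂ} {c : ℂ}
variable (h0 : ∀ i j : Fin r, (j:ℕ) ≤ (i:ℕ) → A i j = 0)
variable (h1 : ∀ i j : Fin r, (j:ℕ) = (i:ℕ)+1 → A i j = c)

include h0 in
lemma pow_low : ∀ (k : ℕ) (i j : Fin r), (j:ℕ) < (i:ℕ) + k → (A ^ k) i j = 0 := by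
  intro k
  induction k with
  | zero =>
      intro i j h
      rw [pow_zero]
      exact Matrix.one_apply_ne (fun e => by rw [e] at h; omega)
  | succ k ih =>
      intro i j h
      rw [pow_succ, Matrix.mul_apply]
      apply Finset.sum_eq_zero
      intro l _
      rcases lt_or_ge (l:ℕ) ((i:ℕ) + k) with hl | hl
      · rw [ih i l hl, zero_mul]
      · rw [h0 l j (by omega), mul_zero]

include h0 h1 in
lemma pow_diag : ∀ (k : ℕ) (i j : Fin r), (j:ℕ) = (i:ℕ) + k → (A ^ k) i j = c ^ k := by
  intro k
  induction k with
  | zero =>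
      intro i j h
      rw [pow_zero, pow_zero]
      have e : j = i := Fin.ext (by omega)
      subst e
      exact Matrix.one_apply_eq j
  | succ k ih =>
      intro i j h
      have hik : (i:ℕ) + k < r := by omega
      rw [pow_succ, Matrix.mul_apply]
      rw [Finset.sum_eq_single (⟨(i:ℕ)+k, hik⟩ : Fin r)]
      · rw [ih i ⟨(i:ℕ)+k, hik⟩ rfl, h1 ⟨(i:ℕ)+k, hik⟩ j (by show (j:ℕ) = (i:ℕ)+k+1; omega), pow_succ]
      · intro l _ hl
        have hlv : (l:ℕ) ≠ (i:ℕ) + k := fun e => hl (Fin.ext e)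
        rcases lt_or_ge (l:ℕ) ((i:ℕ) + k) with h2 | h2
        · rw [pow_low h0 k i l h2, zero_mul]
        · rw [h0 l j (by omega), mul_zero]
      · intro hmem; exact absurd (Finset.mem_univ _) hmem

end SJ


lemma rank_NN (hr : 1 ≤ r) : (NN r).rank = r - 1 := by
  haveI : NeZero r := ⟨by omega⟩
  have hker : LinearMap.ker (NN r).mulVecLin
      = Submodule.span ℂ {Pi.single (0 : Fin r) (1:ℂ)} := by
    apply le_antisymm
    · intro x hx
      rw [LinearMap.mem_ker] at hx
      have hx' : ∀ i : Fin r, (NN r).mulVec x i = 0 := fun i => congrFun hx i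
      have hzero : ∀ j : Fin r, j ≠ 0 → x j = 0 := by
        intro j hj
        have hj1 : 1 ≤ (j:ℕ) := by
          rcases Nat.eq_zero_or_pos (j:ℕ) with h | h
          · exact absurd (Fin.ext h) hj
          · exact h
        have hi : (j:ℕ) - 1 < r := by omega
        have h2 := hx' ⟨(j:ℕ)-1, hi⟩
        rw [Matrix.mulVec, dotProduct, Finset.sum_eq_single j] at h2
        · rwa [NN_apply, if_pos (show (j:ℕ) = (j:ℕ)-1+1 by omega), one_mul] at h2
        · intro l _ hl
          rw [NN_apply, if_neg (fun e => hl (Fin.ext (by simp only [Fin.val_mk] at e; omega))), zero_mul]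
        · intro h; exact absurd (Finset.mem_univ _) h
      rw [Submodule.mem_span_singleton]
      refine ⟨x 0, ?_⟩
      funext j
      rcases eq_or_ne j 0 with rfl | hj
      · simp
      · rw [Pi.smul_apply, Pi.single_apply, if_neg hj, hzero j hj, smul_zero]
    · rw [Submodule.span_le, Set.singleton_subset_iff, SetLike.mem_coe, LinearMap.mem_ker]
      funext i
      rw [Matrix.mulVecLin_apply, Matrix.mulVec, dotProduct, Pi.zero_apply]
      apply Finset.sum_eq_zero
      intro l _
      rcases eq_or_ne l 0 with rfl | hl
      · rw [NN_apply, if_neg (by simp only [Fin.val_zero]; omega), zero_mul]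
      · rw [Pi.single_apply, if_neg hl, mul_zero]
  have h1 : Module.finrank ℂ (LinearMap.ker (NN r).mulVecLin) = 1 := by
    rw [hker]
    refine finrank_span_singleton ?_
    intro h
    have := congrFun h 0
    rw [Pi.single_eq_same, Pi.zero_apply] at this
    exact one_ne_zero this
  have h2 := LinearMap.finrank_range_add_finrank_ker (NN r).mulVecLin
  rw [h1] at h2
  have h3 : Module.finrank ℂ (Fin r → ℂ) = r := by simp
  rw [h3] at h2
  rw [Matrix.rank]
  omega

end Stmt7


/-- Lemma 4.1, second part: if `p'(λ) ≠ 0` then `p(J_r(λ))` is similar to the single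
Jordan block `J_r(p(λ))`; equivalently `p(J_r(λ)) − p(λ)·1` has rank `r − 1`. -/
theorem stmt7 (r : ℕ) (hr : 1 ≤ r) (lam : ℂ) (p : Polynomial ℂ)
    (hp : (Polynomial.derivative p).eval lam ≠ 0) :
    (∃ P : Matrix (Fin r) (Fin r) ℂ, IsUnit P.det ∧
      Polynomial.aeval (jordanBlock ℂ r lam) p
        = P * jordanBlock ℂ r (p.eval lam) * P⁻¹) ∧
    (Polynomial.aeval (jordanBlock ℂ r lam) p
        - p.eval lam • (1 : Matrix (Fin r) (Fin r) ℂ)).rank = r - 1 := by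
  classical
  set c : ℂ := (Polynomial.derivative p).eval lam with hc
  set N : Matrix (Fin r) (Fin r) ℂ := Stmt7.NN r with hN
  set q : Polynomial ℂ := p.comp (Polynomial.X + Polynomial.C lam) with hq
  set U : Matrix (Fin r) (Fin r) ℂ := Polynomial.aeval N q.divX with hU
  set V : Matrix (Fin r) (Fin r) ℂ := Polynomial.aeval N q.divX.divX with hV
  have comm : ∀ s t : Polynomial ℂ, Commute (Polynomial.aeval N s) (Polynomial.aeval N t) := by
    intro s t
    show _ * _ = _ * _
    rw [← map_mul, ← map_mul, mul_comm]
  have hNX : N = Polynomial.aeval N (Polynomial.X : Polynomial ℂ) :=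
    (Polynomial.aeval_X N).symm
  have commN : ∀ s : Polynomial ℂ, Commute (Polynomial.aeval N s) N := by
    intro s
    have h := comm s (Polynomial.X : Polynomial ℂ)
    rwa [Polynomial.aeval_X] at h
  have commUN : Commute U N := by rw [hU]; exact commN _
  have commVN : Commute V N := by rw [hV]; exact commN _
  have hN0 : ∀ i j : Fin r, (j:ℕ) ≤ (i:ℕ) → N i j = 0 := by
    intro i j h; rw [hN, Stmt7.NN_apply, if_neg (by omega)]
  have hNr : N ^ r = 0 := by
    ext i j
    rw [Stmt7.pow_low hN0 r i j (by omega), Matrix.zero_apply]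
  have hJ : jordanBlock ℂ r lam = Polynomial.aeval N (Polynomial.X + Polynomial.C lam) := by
    rw [map_add, Polynomial.aeval_X, Polynomial.aeval_C, Algebra.algebraMap_eq_smul_one,
      Stmt7.jordan_eq, ← hN, add_comm]
  have hTq : Polynomial.aeval (jordanBlock ℂ r lam) p = Polynomial.aeval N q := by
    rw [hq, Polynomial.aeval_comp, ← hJ]
  have hq0 : q.coeff 0 = p.eval lam := by
    rw [Polynomial.coeff_zero_eq_eval_zero, hq, Polynomial.eval_comp]
    simp
  have hT : Polynomial.aeval (jordanBlock ℂ r lam) p = U * N + (p.eval lam) • 1 := by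
    rw [hTq]
    conv_lhs => rw [← q.divX_mul_X_add]
    rw [map_add, map_mul, Polynomial.aeval_X, Polynomial.aeval_C,
      Algebra.algebraMap_eq_smul_one, hq0, ← hU]
  set M : Matrix (Fin r) (Fin r) ℂ := N * U with hM
  have hTM : Polynomial.aeval (jordanBlock ℂ r lam) p - (p.eval lam) • 1 = M := by
    rw [hT, add_sub_cancel_right, commUN.eq, hM]
  have hqc : q.divX.coeff 0 = c := by
    rw [Polynomial.coeff_divX]
    have h1 : q.coeff 1 = (Polynomial.derivative q).coeff 0 := by
      simp [Polynomial.coeff_derivative]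
    rw [h1, Polynomial.coeff_zero_eq_eval_zero, hq, Polynomial.derivative_comp]
    simp [hc]
  have hUd : U = V * N + c • 1 := by
    rw [hU]
    conv_lhs => rw [← q.divX.divX_mul_X_add]
    rw [map_add, map_mul, Polynomial.aeval_X, Polynomial.aeval_C,
      Algebra.algebraMap_eq_smul_one, hqc, ← hV]
  have hUd' : U = c • 1 + N * V := by rw [hUd, ← commVN.eq, add_comm]
  have hNVnil : IsNilpotent (N * V) := ⟨r, by rw [commVN.symm.mul_pow, hNr, zero_mul]⟩
  have hc1 : IsUnit (c • (1 : Matrix (Fin r) (Fin r) ℂ)) := by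
    rw [← Algebra.algebraMap_eq_smul_one]
    exact (isUnit_iff_ne_zero.mpr hp).map (algebraMap ℂ (Matrix (Fin r) (Fin r) ℂ))
  have hUunit : IsUnit U := by
    rw [hUd']
    exact hNVnil.isUnit_add_left_of_commute hc1 ((Commute.one_right (N * V)).smul_right c)
  have hUT_V : Stmt7.UT V := by rw [hV, hN]; exact Stmt7.UT_aeval _
  have hUlow : ∀ l j : Fin r, (j:ℕ) ≤ (l:ℕ) → U l j = c * (1 : Matrix (Fin r) (Fin r) ℂ) l j := by
    intro l j h
    have h2 : (N * V) l j = 0 := by rw [hN]; exact Stmt7.NN_mul_UT hUT_V h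
    rw [hUd', Matrix.add_apply, h2, add_zero, Matrix.smul_apply, smul_eq_mul]
  have hM0 : ∀ i j : Fin r, (j:ℕ) ≤ (i:ℕ) → M i j = 0 := by
    intro i j h
    rw [hM, Matrix.mul_apply]
    apply Finset.sum_eq_zero
    intro l _
    rcases eq_or_ne ((l:ℕ)) ((i:ℕ)+1) with hl | hl
    · have hUlj : U l j = 0 := by
        rw [hUlow l j (by omega), Matrix.one_apply_ne (fun e => by
          rw [e] at hl; omega), mul_zero]
      rw [hUlj, mul_zero]
    · rw [hN, Stmt7.NN_apply, if_neg hl, zero_mul]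
  have hM1 : ∀ i j : Fin r, (j:ℕ) = (i:ℕ)+1 → M i j = c := by
    intro i j h
    rw [hM, Matrix.mul_apply, Finset.sum_eq_single j]
    · rw [hN, Stmt7.NN_apply, if_pos h, one_mul, hUlow j j (le_refl _),
        Matrix.one_apply_eq, mul_one]
    · intro l _ hl
      rw [hN, Stmt7.NN_apply, if_neg (fun e => hl (Fin.ext (by omega))), zero_mul]
    · intro hmem; exact absurd (Finset.mem_univ _) hmem
  have hMr : M ^ r = 0 := by
    ext i j
    rw [Stmt7.pow_low hM0 r i j (by omega), Matrix.zero_apply]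
  have hrr : r - 1 < r := by omega
  set Pm : Matrix (Fin r) (Fin r) ℂ :=
    Matrix.of (fun i j : Fin r => (M ^ (r - 1 - (j:ℕ))) i ⟨r-1, hrr⟩) with hPm
  have hPdet : IsUnit Pm.det := by
    have htri : Pm.BlockTriangular id := by
      intro i j hij
      have hji : (j:ℕ) < (i:ℕ) := hij
      show (M ^ (r - 1 - (j:ℕ))) i ⟨r-1, hrr⟩ = 0
      exact Stmt7.pow_low hM0 _ i ⟨r-1,hrr⟩ (by
        simp only [Fin.val_mk]
        have := i.is_lt
        omega)
    rw [Matrix.det_of_upperTriangular htri, isUnit_iff_ne_zero]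
    apply Finset.prod_ne_zero_iff.mpr
    intro i _
    have hdiag : Pm i i = c ^ (r-1-(i:ℕ)) :=
      Stmt7.pow_diag hM0 hM1 _ i ⟨r-1,hrr⟩ (by
        simp only [Fin.val_mk]
        have := i.is_lt
        omega)
    rw [hdiag]
    exact pow_ne_zero _ hp
  have hMP : M * Pm = Pm * N := by
    ext i j
    have hjr := j.is_lt
    have hL : (M * Pm) i j = (M ^ ((r - 1 - (j:ℕ)) + 1)) i ⟨r-1,hrr⟩ := by
      rw [pow_succ', hPm, Matrix.mul_apply, Matrix.mul_apply]
      rfl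
    rw [hL, hPm]
    show (M ^ ((r - 1 - (j:ℕ)) + 1)) i ⟨r-1,hrr⟩
      = ((Matrix.of fun i j : Fin r => (M ^ (r - 1 - (j:ℕ))) i ⟨r-1, hrr⟩) * N) i j
    rw [Matrix.mul_apply]
    rcases Nat.eq_zero_or_pos (j:ℕ) with hj0 | hj0
    · rw [Finset.sum_eq_zero]
      · have he : (r-1-(j:ℕ))+1 = r := by omega
        rw [he, hMr, Matrix.zero_apply]
      · intro l _
        rw [hN, Stmt7.NN_apply, if_neg (by omega), mul_zero]
    · have hjl : (j:ℕ) - 1 < r := by omega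
      rw [Finset.sum_eq_single (⟨(j:ℕ)-1, hjl⟩ : Fin r)]
      · rw [hN, Stmt7.NN_apply,
          if_pos (show (j:ℕ) = ((⟨(j:ℕ)-1, hjl⟩ : Fin r):ℕ)+1 by simp only [Fin.val_mk]; omega),
          mul_one]
        show (M ^ ((r - 1 - (j:ℕ)) + 1)) i ⟨r-1,hrr⟩
          = (M ^ (r - 1 - (((⟨(j:ℕ)-1, hjl⟩ : Fin r)):ℕ))) i ⟨r-1,hrr⟩
        have he : (r - 1 - (j:ℕ)) + 1 = r - 1 - ((j:ℕ)-1) := by omega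
        simp only [Fin.val_mk, he]
      · intro l _ hl
        rw [hN, Stmt7.NN_apply,
          if_neg (fun e => hl (Fin.ext (by simp only [Fin.val_mk] at e ⊢; omega))), mul_zero]
      · intro hmem; exact absurd (Finset.mem_univ _) hmem
  have hPinv : Pm * Pm⁻¹ = 1 := Matrix.mul_nonsing_inv Pm hPdet
  have hMc : M = Pm * N * Pm⁻¹ := by
    rw [← hMP, Matrix.mul_assoc, hPinv, Matrix.mul_one]
  constructor
  · refine ⟨Pm, hPdet, ?_⟩
    have hTfull : Polynomial.aeval (jordanBlock ℂ r lam) p = M + (p.eval lam) • 1 :=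
      sub_eq_iff_eq_add.mp hTM
    rw [hTfull, Stmt7.jordan_eq, ← hN]
    rw [Matrix.mul_add, Matrix.add_mul, mul_smul_comm, Matrix.mul_one, smul_mul_assoc, hPinv,
      ← hMc, add_comm]
  · rw [hTM, hM,
      Matrix.rank_mul_eq_left_of_isUnit_det U N ((Matrix.isUnit_iff_isUnit_det U).mp hUunit),
      hN]
    exact Stmt7.rank_NN hr
end

section
/- Let R be a commutative ring, r ≥ 2, λ ∈ R, let J = J_r(λ) ∈ Mat_{r×r}(R) be the Jordan block with eigenvalue λ, and let T ∈ Mat_{r×r}(R) commute with J. Then I_T ⊆ I_J as ideals of R[z₁,…,z_r]. Moreover, if R is a field and T = p(J) for a polynomial p ∈ R[t] with p'(λ) ≠ 0, then I_T = I_J. -/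
open MvPolynomial

namespace L43

variable {R : Type*} [CommRing R]

/-- Extended variable: `X n` if `n < r`, else `0`. -/
noncomputable def Z (R : Type*) [CommRing R] (r n : ℕ) : MvPolynomial (Fin r) R :=
  if h : n < r then X ⟨n, h⟩ else 0

lemma Z_zero {r n : ℕ} (h : r ≤ n) : Z R r n = 0 := dif_neg (by omega)

lemma Z_fin {r : ℕ} (k : Fin r) : Z R r (k : ℕ) = X k := by
  rw [Z, dif_pos k.isLt]

/-- The basic quadric `z_a z_{b+1} - z_b z_{a+1}`. -/
noncomputable def hp (R : Type*) [CommRing R] (r a b : ℕ) : MvPolynomial (Fin r) R :=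
  Z R r a * Z R r (b+1) - Z R r b * Z R r (a+1)

/-- `z_i z_{j+m} - z_j z_{i+m}`. -/
noncomputable def Dp (R : Type*) [CommRing R] (r i j m : ℕ) : MvPolynomial (Fin r) R :=
  Z R r i * Z R r (j+m) - Z R r j * Z R r (i+m)

/-- The generator polynomial of `higgsIdeal M` for the pair `(i,j)`. -/
noncomputable def gen {r : ℕ} (M : Matrix (Fin r) (Fin r) R) (i j : Fin r) :
    MvPolynomial (Fin r) R :=
  ∑ k : Fin r, X k * (C (M j k) * X i - C (M i k) * X j)

lemma gen_mem {r : ℕ} (M : Matrix (Fin r) (Fin r) R) {i j : Fin r} (hij : i < j) :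
    gen M i j ∈ higgsIdeal M :=
  Ideal.subset_span ⟨i, j, hij, rfl⟩

lemma higgs_le_iff {r : ℕ} (M : Matrix (Fin r) (Fin r) R)
    (I : Ideal (MvPolynomial (Fin r) R)) :
    higgsIdeal M ≤ I ↔ ∀ i j : Fin r, i < j → gen M i j ∈ I := by
  rw [higgsIdeal, Ideal.span_le]
  constructor
  · intro h i j hij; exact h ⟨i, j, hij, rfl⟩
  · rintro h p ⟨i, j, hij, rfl⟩; exact h i j hij

lemma gen_eq {r : ℕ} (M : Matrix (Fin r) (Fin r) R) (i j : Fin r) :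
    gen M i j = X i * (∑ k : Fin r, C (M j k) * X k) - X j * (∑ k : Fin r, C (M i k) * X k) := by
  rw [gen, Finset.mul_sum, Finset.mul_sum, ← Finset.sum_sub_distrib]
  exact Finset.sum_congr rfl fun k _ => by ring

lemma jordan_rowsum {A : Type*} [CommRing A] (f : R →+* A) {r : ℕ} (lam : R) (i : Fin r)
    (w : Fin r → A) :
    ∑ k, f (jordanBlock R r lam i k) * w k
      = f lam * w i + (if h : (i:ℕ)+1 < r then w ⟨(i:ℕ)+1, h⟩ else 0) := by
  by_cases h : (i:ℕ)+1 < r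
  · rw [dif_pos h]
    have key : ∀ k : Fin r, f (jordanBlock R r lam i k) * w k
        = (if k = i then f lam * w i else 0) + (if k = (⟨(i:ℕ)+1, h⟩ : Fin r) then w k else 0) := by
      intro k
      rcases eq_or_ne k i with h1 | h1
      · subst h1
        simp [jordanBlock, Fin.ext_iff]
      · rcases eq_or_ne k (⟨(i:ℕ)+1, h⟩ : Fin r) with h2 | h2
        · subst h2
          have : ¬ (i:ℕ) = (i:ℕ)+1 := by omega
          simp [jordanBlock, Fin.ext_iff, this, h1]
        · have e1 : ¬ (i:ℕ) = (k:ℕ) := fun hh => h1 (Fin.ext hh.symm)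
          have e2 : ¬ (k:ℕ) = (i:ℕ)+1 := fun hh => h2 (Fin.ext hh)
          simp [jordanBlock, e1, e2, h1, h2]
    rw [Finset.sum_congr rfl fun k _ => key k, Finset.sum_add_distrib,
      Finset.sum_ite_eq' Finset.univ i, Finset.sum_ite_eq' Finset.univ
        (⟨(i:ℕ)+1, h⟩ : Fin r)]
    simp
  · rw [dif_neg h]
    have key : ∀ k : Fin r, f (jordanBlock R r lam i k) * w k
        = (if k = i then f lam * w i else 0) := by
      intro k
      rcases eq_or_ne k i with h1 | h1
      · subst h1; simp [jordanBlock, Fin.ext_iff]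
      · have e1 : ¬ (i:ℕ) = (k:ℕ) := fun hh => h1 (Fin.ext hh.symm)
        have e2 : ¬ (k:ℕ) = (i:ℕ)+1 := by have := k.isLt; omega
        simp [jordanBlock, e1, e2, h1]
    rw [Finset.sum_congr rfl fun k _ => key k, Finset.sum_ite_eq' Finset.univ i]
    simp

lemma jordan_colsum {A : Type*} [CommRing A] (f : R →+* A) {r : ℕ} (lam : R) (j : Fin r)
    (v : Fin r → A) :
    ∑ k, v k * f (jordanBlock R r lam k j)
      = f lam * v j + (if h : 1 ≤ (j:ℕ) then v ⟨(j:ℕ)-1, by omega⟩ else 0) := by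
  by_cases h : 1 ≤ (j:ℕ)
  · rw [dif_pos h]
    have hlt : (j:ℕ)-1 < r := by have := j.isLt; omega
    have key : ∀ k : Fin r, v k * f (jordanBlock R r lam k j)
        = (if k = j then f lam * v j else 0) + (if k = (⟨(j:ℕ)-1, hlt⟩ : Fin r) then v k else 0) := by
      intro k
      rcases eq_or_ne k j with h1 | h1
      · subst h1
        have : ¬ (k:ℕ) = (k:ℕ)-1 := by omega
        simp [jordanBlock, Fin.ext_iff, this, mul_comm]
      · rcases eq_or_ne k (⟨(j:ℕ)-1, hlt⟩ : Fin r) with h2 | h2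
        · have hkv : (k:ℕ) = (j:ℕ)-1 := by rw [h2]
          have e1 : ¬ (k:ℕ) = (j:ℕ) := by omega
          have e2 : (j:ℕ) = (k:ℕ) + 1 := by omega
          rw [if_neg h1, if_pos h2]
          have : jordanBlock R r lam k j = 1 := by
            show (if (k:ℕ)=(j:ℕ) then lam else if (j:ℕ)=(k:ℕ)+1 then 1 else 0) = 1
            rw [if_neg e1, if_pos e2]
          rw [this]; simp
        · have e1 : ¬ (k:ℕ) = (j:ℕ) := fun hh => h1 (Fin.ext hh)
          have e2 : ¬ (j:ℕ) = (k:ℕ)+1 := by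
            intro hh
            apply h2; apply Fin.ext; simp; omega
          simp [jordanBlock, e1, e2, h1, h2]
    rw [Finset.sum_congr rfl fun k _ => key k, Finset.sum_add_distrib,
      Finset.sum_ite_eq' Finset.univ j, Finset.sum_ite_eq' Finset.univ (⟨(j:ℕ)-1, hlt⟩ : Fin r)]
    simp
  · rw [dif_neg h]
    have hj0 : (j:ℕ) = 0 := by omega
    have key : ∀ k : Fin r, v k * f (jordanBlock R r lam k j)
        = (if k = j then f lam * v j else 0) := by
      intro k
      rcases eq_or_ne k j with h1 | h1
      · subst h1; simp [jordanBlock, Fin.ext_iff, mul_comm]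
      · have e1 : ¬ (k:ℕ) = (j:ℕ) := fun hh => h1 (Fin.ext hh)
        have e2 : ¬ (j:ℕ) = (k:ℕ)+1 := by omega
        simp [jordanBlock, e1, e2, h1]
    rw [Finset.sum_congr rfl fun k _ => key k, Finset.sum_ite_eq' Finset.univ j]
    simp

lemma rowJ {r : ℕ} (lam : R) (j : Fin r) :
    ∑ k : Fin r, C (jordanBlock R r lam j k) * X k
      = C lam * X j + Z R r ((j:ℕ)+1) := by
  rw [jordan_rowsum (C : R →+* MvPolynomial (Fin r) R) lam j X]
  congr 1

lemma gen_jordan {r : ℕ} (lam : R) (i j : Fin r) :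
    gen (jordanBlock R r lam) i j = hp R r i j := by
  rw [gen_eq, rowJ, rowJ, hp, ← Z_fin i, ← Z_fin j]
  ring

lemma hp_mem {r : ℕ} (lam : R) (a b : ℕ) :
    hp R r a b ∈ higgsIdeal (jordanBlock R r lam) := by
  rcases lt_trichotomy a b with h | h | h
  · by_cases hb : b < r
    · have ha : a < r := lt_trans h hb
      have := gen_mem (jordanBlock R r lam) (i := ⟨a, ha⟩) (j := ⟨b, hb⟩) h
      rwa [gen_jordan] at this
    · have e : hp R r a b = 0 := by
        rw [hp, Z_zero (n := b) (by omega), Z_zero (n := b+1) (by omega)]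
        ring
      rw [e]; exact zero_mem _
  · subst h
    have e : hp R r a a = 0 := by rw [hp]; ring
    rw [e]; exact zero_mem _
  · by_cases ha : a < r
    · have hb : b < r := lt_trans h ha
      have h1 := gen_mem (jordanBlock R r lam) (i := ⟨b, hb⟩) (j := ⟨a, ha⟩) h
      rw [gen_jordan] at h1
      have e : hp R r a b = - hp R r b a := by rw [hp, hp]; ring
      rw [e]; exact neg_mem h1
    · have e : hp R r a b = 0 := by
        rw [hp, Z_zero (n := a) (by omega), Z_zero (n := a+1) (by omega)]
        ring
      rw [e]; exact zero_mem _

lemma Dp_rec {r : ℕ} (i j m : ℕ) :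
    Dp R r i j (m+2) = hp R r i (j+m+1) - hp R r j (i+m+1) + Dp R r (i+1) (j+1) m := by
  rw [Dp, Dp, hp, hp]
  have e1 : j + (m+2) = j+m+1+1 := by omega
  have e2 : i + (m+2) = i+m+1+1 := by omega
  have e3 : j + 1 + m = j+m+1 := by omega
  have e4 : i + 1 + m = i+m+1 := by omega
  rw [e1, e2, e3, e4]
  ring

lemma Dp_mem {r : ℕ} (I : Ideal (MvPolynomial (Fin r) R)) :
    ∀ m i j : ℕ, (∀ a b : ℕ, a + b + 1 = i + j + m → hp R r a b ∈ I) → Dp R r i j m ∈ I := by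
  intro m
  induction m using Nat.strong_induction_on with
  | _ m ih =>
    match m with
    | 0 =>
      intro i j _
      have e : Dp R r i j 0 = 0 := by rw [Dp]; ring
      rw [e]; exact zero_mem _
    | 1 =>
      intro i j H
      have e : Dp R r i j 1 = hp R r i j := rfl
      rw [e]; exact H i j rfl
    | (m+2) =>
      intro i j H
      rw [Dp_rec]
      refine add_mem (sub_mem (H _ _ (by omega)) (H _ _ (by omega))) ?_
      exact ih m (by omega) (i+1) (j+1) (fun a b hab => H a b (by omega))

def coefT {r : ℕ} (h0 : 0 < r) (T : Matrix (Fin r) (Fin r) R) (m : ℕ) : R :=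
  if h : m < r then T ⟨0, h0⟩ ⟨m, h⟩ else 0

lemma comm_key {r : ℕ} (lam : R) (T : Matrix (Fin r) (Fin r) R)
    (hT : T * jordanBlock R r lam = jordanBlock R r lam * T) (i j : Fin r) :
    (if h : 1 ≤ (j:ℕ) then T i ⟨(j:ℕ)-1, by have := j.isLt; omega⟩ else 0)
      = (if h : (i:ℕ)+1 < r then T ⟨(i:ℕ)+1, h⟩ j else 0) := by
  have h1 : (T * jordanBlock R r lam) i j = (jordanBlock R r lam * T) i j := by rw [hT]
  rw [Matrix.mul_apply, Matrix.mul_apply] at h1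
  have hc := jordan_colsum (RingHom.id R) lam j (fun k => T i k)
  have hr := jordan_rowsum (RingHom.id R) lam i (fun k => T k j)
  simp only [RingHom.id_apply] at hc hr
  rw [hc, hr] at h1
  exact add_left_cancel h1

lemma toeplitz {r : ℕ} (h0 : 0 < r) (lam : R) (T : Matrix (Fin r) (Fin r) R)
    (hT : T * jordanBlock R r lam = jordanBlock R r lam * T) :
    ∀ (a : ℕ) (ha : a < r) (b : ℕ) (hb : b < r),
      T ⟨a, ha⟩ ⟨b, hb⟩ = if a ≤ b then coefT h0 T (b - a) else 0 := by
  intro a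
  induction a with
  | zero =>
    intro _ b hb
    rw [if_pos (Nat.zero_le b), coefT]
    simp only [Nat.sub_zero]
    rw [dif_pos hb]
  | succ s ih =>
    intro ha b hb
    have hs : s < r := by omega
    have key := comm_key lam T hT ⟨s, hs⟩ ⟨b, hb⟩
    rw [dif_pos (show s+1 < r from ha)] at key
    match b, hb with
    | 0, hb =>
      rw [dif_neg (by simp)] at key
      rw [if_neg (by omega)]
      exact key.symm
    | (t+1), hb =>
      rw [dif_pos (by simp : 1 ≤ (((⟨t+1, hb⟩ : Fin r)):ℕ))] at key
      have e : T ⟨s+1, ha⟩ ⟨t+1, hb⟩ = T ⟨s, hs⟩ ⟨t, by omega⟩ := key.symm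
      rw [e, ih hs t (by omega)]
      have e2 : t + 1 - (s + 1) = t - s := by omega
      rw [e2]
      by_cases hst : s ≤ t
      · rw [if_pos hst, if_pos (by omega)]
      · rw [if_neg hst, if_neg (by omega)]

lemma rowT {r : ℕ} (h0 : 0 < r) (lam : R) (T : Matrix (Fin r) (Fin r) R)
    (hT : T * jordanBlock R r lam = jordanBlock R r lam * T) (i : Fin r) :
    ∑ k : Fin r, C (T i k) * X k
      = ∑ m ∈ Finset.range r, C (coefT h0 T m) * Z R r ((i:ℕ) + m) := by
  have step1 : ∀ k : Fin r, C (T i k) * X k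
      = (fun n => if (i:ℕ) ≤ n then C (coefT h0 T (n - (i:ℕ))) * Z R r n else 0) (k : ℕ) := by
    intro k
    have h2 := toeplitz h0 lam T hT i.val i.isLt k.val k.isLt
    rw [Fin.eta, Fin.eta] at h2
    rw [h2]
    by_cases h : (i:ℕ) ≤ (k:ℕ)
    · simp only [if_pos h, Z_fin]
    · simp only [if_neg h, map_zero, zero_mul]
  rw [Finset.sum_congr rfl (fun k _ => step1 k)]
  rw [Fin.sum_univ_eq_sum_range
    (fun n => if (i:ℕ) ≤ n then C (coefT h0 T (n - (i:ℕ))) * Z R r n else 0) r]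
  rw [← Finset.sum_filter]
  have hfil : (Finset.range r).filter (fun n => (i:ℕ) ≤ n) = Finset.Ico (i:ℕ) r := by
    ext n
    simp only [Finset.mem_filter, Finset.mem_range, Finset.mem_Ico]
    omega
  rw [hfil, Finset.sum_Ico_eq_sum_range]
  simp only [Nat.add_sub_cancel_left]
  apply Finset.sum_subset
  · intro x hx
    simp only [Finset.mem_range] at hx ⊢
    omega
  · intro x hx hnx
    simp only [Finset.mem_range] at hx hnx
    rw [Z_zero (by omega), mul_zero]

lemma gen_eq_sum {r : ℕ} (h0 : 0 < r) (lam : R) (T : Matrix (Fin r) (Fin r) R)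
    (hT : T * jordanBlock R r lam = jordanBlock R r lam * T) (i j : Fin r) :
    gen T i j = ∑ m ∈ Finset.range r, C (coefT h0 T m) * Dp R r (i:ℕ) (j:ℕ) m := by
  rw [gen_eq, rowT h0 lam T hT i, rowT h0 lam T hT j, Finset.mul_sum, Finset.mul_sum,
    ← Finset.sum_sub_distrib]
  refine Finset.sum_congr rfl fun m _ => ?_
  rw [Dp, ← Z_fin i, ← Z_fin j]
  ring

lemma part1 {r : ℕ} (h0 : 0 < r) (lam : R) (T : Matrix (Fin r) (Fin r) R)
    (hT : T * jordanBlock R r lam = jordanBlock R r lam * T) :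
    higgsIdeal T ≤ higgsIdeal (jordanBlock R r lam) := by
  rw [higgs_le_iff]
  intro i j hij
  rw [gen_eq_sum h0 lam T hT i j]
  refine Ideal.sum_mem _ fun m _ => ?_
  exact Ideal.mul_mem_left _ _ (Dp_mem _ m i j (fun a b _ => hp_mem lam a b))

lemma colsum0 {r : ℕ} (hr : 2 ≤ r) (lam : R) (v : Fin r → R) :
    ∑ k, v k * jordanBlock R r lam k ⟨0, by omega⟩ = lam * v ⟨0, by omega⟩ := by
  have hc := jordan_colsum (RingHom.id R) lam (⟨0, by omega⟩ : Fin r) v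
  simp only [RingHom.id_apply] at hc
  rw [hc, dif_neg (by simp)]
  rw [add_zero]

lemma colsum1 {r : ℕ} (hr : 2 ≤ r) (lam : R) (v : Fin r → R) :
    ∑ k, v k * jordanBlock R r lam k ⟨1, by omega⟩
      = lam * v ⟨1, by omega⟩ + v ⟨0, by omega⟩ := by
  have hc := jordan_colsum (RingHom.id R) lam (⟨1, by omega⟩ : Fin r) v
  simp only [RingHom.id_apply] at hc
  rw [hc, dif_pos (by simp : 1 ≤ (((⟨1, by omega⟩ : Fin r)):ℕ))]

lemma jpow_entries {r : ℕ} (hr : 2 ≤ r) (lam : R) (n : ℕ) :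
    (jordanBlock R r lam ^ n) ⟨0, by omega⟩ ⟨0, by omega⟩ = lam ^ n ∧
    (jordanBlock R r lam ^ (n+1)) ⟨0, by omega⟩ ⟨1, by omega⟩ = ((n : R)+1) * lam ^ n := by
  induction n with
  | zero =>
    constructor
    · simp [Matrix.one_apply]
    · rw [zero_add, pow_one]
      have e : jordanBlock R r lam ⟨0, by omega⟩ ⟨1, by omega⟩ = 1 := by
        show (if (0:ℕ) = (1:ℕ) then lam else if (1:ℕ) = (0:ℕ)+1 then (1:R) else 0) = 1
        norm_num
      rw [e]
      norm_num
  | succ n ih =>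
    obtain ⟨h00, h01⟩ := ih
    have h00' : (jordanBlock R r lam ^ (n+1)) ⟨0, by omega⟩ ⟨0, by omega⟩ = lam ^ (n+1) := by
      rw [pow_succ, Matrix.mul_apply, colsum0 hr lam, h00]
      ring
    refine ⟨h00', ?_⟩
    rw [pow_succ, Matrix.mul_apply, colsum1 hr lam, h01, h00']
    push_cast
    ring

lemma aeval_01 {r : ℕ} (hr : 2 ≤ r) (lam : R) (q : Polynomial R) :
    (Polynomial.aeval (jordanBlock R r lam) q) ⟨0, by omega⟩ ⟨1, by omega⟩
      = (Polynomial.derivative q).eval lam := by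
  induction q using Polynomial.induction_on with
  | C a =>
    rw [Polynomial.aeval_C, Matrix.algebraMap_matrix_apply,
      if_neg (by simp : ¬ ((⟨0, by omega⟩ : Fin r) = ⟨1, by omega⟩))]
    simp
  | add p q hp hq =>
    rw [map_add, Matrix.add_apply, hp, hq, map_add, Polynomial.eval_add]
  | monomial n a _ =>
    rw [map_mul, Polynomial.aeval_C, map_pow, Polynomial.aeval_X]
    rw [Algebra.algebraMap_eq_smul_one, smul_mul_assoc, one_mul, Matrix.smul_apply,
      smul_eq_mul, (jpow_entries hr lam n).2]
    rw [Polynomial.derivative_C_mul_X_pow]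
    simp only [Nat.add_sub_cancel, Polynomial.eval_mul, Polynomial.eval_C,
      Polynomial.eval_pow, Polynomial.eval_X]
    push_cast
    ring

lemma Qlem {r : ℕ} {K : Type*} [Field K] (h0 : 0 < r) (hr : 2 ≤ r) (lam : K)
    (T : Matrix (Fin r) (Fin r) K)
    (hT : T * jordanBlock K r lam = jordanBlock K r lam * T)
    (hc1 : coefT h0 T 1 ≠ 0) :
    ∀ (n i j : ℕ), 2*r ≤ i + j + n + 2 → hp K r i j ∈ higgsIdeal T := by
  intro n
  induction n with
  | zero =>
    intro i j hij
    by_cases hi : r ≤ i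
    · rw [show hp K r i j = 0 by
        rw [hp, Z_zero hi, Z_zero (show r ≤ i+1 by omega)]; ring]
      exact zero_mem _
    by_cases hj : r ≤ j
    · rw [show hp K r i j = 0 by
        rw [hp, Z_zero hj, Z_zero (show r ≤ j+1 by omega)]; ring]
      exact zero_mem _
    have : i = j := by omega
    subst this
    rw [show hp K r i i = 0 by rw [hp]; ring]
    exact zero_mem _
  | succ n ih =>
    intro i j hij
    by_cases hprev : 2*r ≤ i + j + n + 2
    · exact ih i j hprev
    have aux : ∀ a b : ℕ, a < b → a + b = i + j → hp K r a b ∈ higgsIdeal T := by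
      intro a b hab habij
      by_cases hbr : r ≤ b
      · rw [show hp K r a b = 0 by
          rw [hp, Z_zero hbr, Z_zero (show r ≤ b+1 by omega)]; ring]
        exact zero_mem _
      have har : a < r := by omega
      have hbr' : b < r := by omega
      have hgen0 := gen_mem T (i := ⟨a, har⟩) (j := ⟨b, hbr'⟩) (Fin.mk_lt_mk.mpr hab)
      rw [gen_eq_sum h0 lam T hT] at hgen0
      have hgen : (∑ m ∈ Finset.range r, C (coefT h0 T m) * Dp K r a b m)
          ∈ higgsIdeal T := hgen0
      have h1r : (1:ℕ) ∈ Finset.range r := by simp; omega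
      rw [← Finset.sum_erase_add _ _ h1r] at hgen
      have hrest : (∑ m ∈ (Finset.range r).erase 1, C (coefT h0 T m) * Dp K r a b m)
          ∈ higgsIdeal T := by
        refine Ideal.sum_mem _ fun m hm => ?_
        simp only [Finset.mem_erase, Finset.mem_range] at hm
        refine Ideal.mul_mem_left _ _ ?_
        rcases Nat.eq_zero_or_pos m with hm0 | hmpos
        · subst hm0
          rw [show Dp K r a b 0 = 0 by rw [Dp]; ring]
          exact zero_mem _
        · have hm2 : 2 ≤ m := by omega
          refine Dp_mem _ m a b (fun a' b' hab' => ?_)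
          exact ih a' b' (by omega)
      have hD1 : C (coefT h0 T 1) * Dp K r a b 1 ∈ higgsIdeal T := by
        have hsub := Ideal.sub_mem _ hgen hrest
        simpa using hsub
      rw [show hp K r a b = C ((coefT h0 T 1)⁻¹) * (C (coefT h0 T 1) * Dp K r a b 1) by
        rw [show Dp K r a b 1 = hp K r a b from rfl, ← mul_assoc, ← C_mul,
          inv_mul_cancel₀ hc1, C_1, one_mul]]
      exact Ideal.mul_mem_left _ _ hD1
    rcases lt_trichotomy i j with h | h | h
    · exact aux i j h rfl
    · subst h
      rw [show hp K r i i = 0 by rw [hp]; ring]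
      exact zero_mem _
    · rw [show hp K r i j = - hp K r j i by rw [hp, hp]; ring]
      exact neg_mem (aux j i h (by omega))

end L43

/-- Lemma 4.3: if `T` commutes with the Jordan block `J = J_r(λ)` then `I_T ⊆ I_J`;
moreover if `R` is a field and `T = p(J)` with `p'(λ) ≠ 0` then `I_T = I_J`. -/
theorem stmt8 :
    (∀ (R : Type) [CommRing R] (r : ℕ), 2 ≤ r → ∀ (lam : R)
      (T : Matrix (Fin r) (Fin r) R), Commute T (jordanBlock R r lam) →
      higgsIdeal T ≤ higgsIdeal (jordanBlock R r lam)) ∧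
    (∀ (K : Type) [Field K] (r : ℕ), 2 ≤ r → ∀ (lam : K) (p : Polynomial K),
      (Polynomial.derivative p).eval lam ≠ 0 →
      higgsIdeal (Polynomial.aeval (jordanBlock K r lam) p)
        = higgsIdeal (jordanBlock K r lam)) := by
  constructor
  · intro R _ r hr lam T hT
    exact L43.part1 (by omega) lam T hT.eq
  · intro K _ r hr lam p hp'
    set J := jordanBlock K r lam with hJ
    set T := Polynomial.aeval J p with hTdef
    have h0 : 0 < r := by omega
    have hcomm : T * J = J * T := by
      have h1 : Polynomial.aeval J (p * Polynomial.X)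
          = Polynomial.aeval J (Polynomial.X * p) := by
        rw [mul_comm]
      rw [map_mul, map_mul, Polynomial.aeval_X] at h1
      exact h1
    apply le_antisymm
    · exact L43.part1 h0 lam T hcomm
    · rw [L43.higgs_le_iff]
      intro i j hij
      rw [L43.gen_jordan]
      have hc1 : L43.coefT h0 T 1 ≠ 0 := by
        have e : L43.coefT h0 T 1 = (Polynomial.derivative p).eval lam := by
          rw [L43.coefT, dif_pos (by omega : 1 < r)]
          exact L43.aeval_01 hr lam p
        rw [e]; exact hp'
      exact L43.Qlem h0 hr lam T hcomm hc1 (2*r) (i:ℕ) (j:ℕ) (by omega)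
end

section
/- Let R be an integral domain and let U, V ∈ Mat_{2×2}(R) be two nonzero commuting matrices with U₁₁ = V₁₁ = 0. Then there exist nonzero elements u, v ∈ R such that v·U = u·V. Moreover, if det V ≠ 0 then det U ≠ 0. -/
theorem mat2_ext_aux {R : Type*} (A B : Matrix (Fin 2) (Fin 2) R)
    (h00 : A 0 0 = B 0 0) (h01 : A 0 1 = B 0 1)
    (h10 : A 1 0 = B 1 0) (h11 : A 1 1 = B 1 1) : A = B := by
  ext i j
  fin_cases i <;> fin_cases j
  exacts [h00, h01, h10, h11]

/-- Lemma 5.1: two nonzero commuting `2×2` matrices over a domain with vanishing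
`(1,1)`-entries are proportional: `v·U = u·V` for some nonzero `u, v`; moreover
`det V ≠ 0` implies `det U ≠ 0`. -/
theorem stmt11 {R : Type*} [CommRing R] [IsDomain R]
    (U V : Matrix (Fin 2) (Fin 2) R) (hU : U ≠ 0) (hV : V ≠ 0)
    (hUV : Commute U V) (h11U : U 0 0 = 0) (h11V : V 0 0 = 0) :
    (∃ u v : R, u ≠ 0 ∧ v ≠ 0 ∧ v • U = u • V) ∧ (V.det ≠ 0 → U.det ≠ 0) := by
  have hc : U * V = V * U := hUV
  have e00 : U 0 1 * V 1 0 = V 0 1 * U 1 0 := by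
    have := congrFun (congrFun hc 0) 0
    simpa [Matrix.mul_apply, Fin.sum_univ_two, h11U, h11V] using this
  have e01 : U 0 1 * V 1 1 = V 0 1 * U 1 1 := by
    have := congrFun (congrFun hc 0) 1
    simpa [Matrix.mul_apply, Fin.sum_univ_two, h11U, h11V] using this
  have e10 : U 1 1 * V 1 0 = V 1 1 * U 1 0 := by
    have h' := congrFun (congrFun hc 1) 0
    simp only [Matrix.mul_apply, Fin.sum_univ_two, h11U, h11V, mul_zero, zero_add,
      add_zero, zero_mul] at h'
    linear_combination h'
  obtain ⟨u, v, hu, hv, h⟩ : ∃ u v : R, u ≠ 0 ∧ v ≠ 0 ∧ v • U = u • V := by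
    by_cases hb : U 0 1 ≠ 0
    · refine ⟨U 0 1, V 0 1, hb, ?_, ?_⟩
      · intro h0
        apply hV
        have hc' : V 1 1 = 0 := by
          have := e01; rw [h0, zero_mul] at this
          exact (mul_eq_zero.mp this).resolve_left hb
        have hc'' : V 1 0 = 0 := by
          have := e00; rw [h0, zero_mul] at this
          exact (mul_eq_zero.mp this).resolve_left hb
        exact mat2_ext_aux V 0 h11V h0 hc'' hc'
      · refine mat2_ext_aux _ _ ?_ ?_ ?_ ?_ <;>
          simp only [Matrix.smul_apply, smul_eq_mul, h11U, h11V, mul_zero]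
        · ring
        · linear_combination -e00
        · linear_combination -e01
    · push_neg at hb
      by_cases hcc : U 1 0 ≠ 0
      · refine ⟨U 1 0, V 1 0, hcc, ?_, ?_⟩
        · intro h0
          apply hV
          have hb' : V 0 1 = 0 := by
            have := e00; rw [h0, mul_zero] at this
            exact (mul_eq_zero.mp this.symm).resolve_right hcc
          have hd' : V 1 1 = 0 := by
            have := e10; rw [h0, mul_zero] at this
            exact (mul_eq_zero.mp this.symm).resolve_right hcc
          exact mat2_ext_aux V 0 h11V hb' h0 hd'
        · refine mat2_ext_aux _ _ ?_ ?_ ?_ ?_ <;>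
            simp only [Matrix.smul_apply, smul_eq_mul, h11U, h11V, mul_zero]
          · linear_combination e00
          · ring
          · linear_combination e10
      · push_neg at hcc
        have hd : U 1 1 ≠ 0 := by
          intro h0
          exact hU (mat2_ext_aux U 0 h11U hb hcc h0)
        have hb' : V 0 1 = 0 := by
          have := e01; rw [hb, zero_mul] at this
          exact (mul_eq_zero.mp this.symm).resolve_right hd
        have hc' : V 1 0 = 0 := by
          have := e10; rw [hcc, mul_zero] at this
          exact (mul_eq_zero.mp this).resolve_left hd
        have hd' : V 1 1 ≠ 0 := by
          intro h0
          exact hV (mat2_ext_aux V 0 h11V hb' hc' h0)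
        refine ⟨U 1 1, V 1 1, hd, hd', ?_⟩
        refine mat2_ext_aux _ _ ?_ ?_ ?_ ?_ <;>
          simp only [Matrix.smul_apply, smul_eq_mul, h11U, h11V, hb, hcc, hb', hc', mul_zero] <;>
          ring
  refine ⟨⟨u, v, hu, hv, h⟩, ?_⟩
  intro hdV hdU
  have hdet : v ^ 2 * U.det = u ^ 2 * V.det := by
    have := congrArg Matrix.det h
    simpa [Matrix.det_smul, Fintype.card_fin] using this
  rw [hdU, mul_zero] at hdet
  exact (mul_ne_zero (pow_ne_zero 2 hu) hdV) hdet.symm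
end

section
/- Let ψ ∈ Mat_{2×2}(ℂ[x]) with ψ₁₁ = 0, ψ₁₂ · ψ₂₁ ≠ 0, and such that every common divisor of ψ₁₂, ψ₂₁, ψ₂₂ in ℂ[x] is a unit. Set Δ = ψ₂₂² + 4 ψ₁₂ ψ₂₁ ∈ ℂ[x] and let f = ψ₁₂ t² + ψ₂₂ t − ψ₂₁ ∈ ℂ[x][t]. Then: (a) the quotient ring ℂ[x][t]/(f) is reduced if and only if Δ ≠ 0; (b) the quotient ring ℂ[x][t]/(f) is an integral domain if and only if Δ is not a square in ℂ[x]. -/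
open Polynomial

set_option maxHeartbeats 1000000 in
set_option synthInstance.maxHeartbeats 400000 in
theorem aux14 (a b c : Polynomial ℂ) (ha : a ≠ 0) (hc : c ≠ 0)
    (hgcd : ∀ g : Polynomial ℂ, g ∣ a → g ∣ c → g ∣ b → IsUnit g) :
    (IsReduced (Polynomial (Polynomial ℂ) ⧸
        Ideal.span {C a * X ^ 2 + C b * X - C c})
      ↔ b ^ 2 + 4 * a * c ≠ 0) ∧
    (IsDomain (Polynomial (Polynomial ℂ) ⧸
        Ideal.span {C a * X ^ 2 + C b * X - C c})
      ↔ ¬ ∃ δ : Polynomial ℂ, b ^ 2 + 4 * a * c = δ ^ 2) := by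
  set f : Polynomial (Polynomial ℂ) := C a * X ^ 2 + C b * X - C c with hfdef
  set Δ : Polynomial ℂ := b ^ 2 + 4 * a * c with hΔdef
  have hdeg : f.natDegree = 2 := by
    rw [hfdef, sub_eq_add_neg, ← C_neg]; exact natDegree_quadratic ha
  have hf0 : f ≠ 0 := fun h => by simp [h] at hdeg
  -- primitivity
  have hprim : f.IsPrimitive := by
    rw [isPrimitive_iff_isUnit_of_C_dvd]
    intro r hr
    rw [C_dvd_iff_dvd_coeff] at hr
    have h2 : r ∣ a := by have := hr 2; simpa [hfdef] using this
    have h1 : r ∣ b := by have := hr 1; simpa [hfdef] using this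
    have h0 : r ∣ c := by
      have := hr 0
      rw [show f.coeff 0 = -c by simp [hfdef]] at this
      exact (dvd_neg).mp this
    exact hgcd r h2 h0 h1
  -- the key square identity over R[X]
  have hkeyR : (C (2*a) * X + C b) ^ 2 = C (4*a) * f + C Δ := by
    rw [hfdef, hΔdef]
    simp only [C_mul, C_add, C_pow, map_ofNat]
    ring
  have h2a : (2 : Polynomial ℂ) * a ≠ 0 := mul_ne_zero two_ne_zero ha
  -- fraction field setup
  have hinj : Function.Injective (algebraMap (Polynomial ℂ) (FractionRing (Polynomial ℂ))) :=
    IsFractionRing.injective _ _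
  set φ := algebraMap (Polynomial ℂ) (FractionRing (Polynomial ℂ)) with hφdef
  have ha'0 : φ a ≠ 0 := fun h => ha (hinj (by rw [h, map_zero]))
  have hc'0 : φ c ≠ 0 := fun h => hc (hinj (by rw [h, map_zero]))
  set g : Polynomial (FractionRing (Polynomial ℂ)) := f.map φ with hgdef
  have hgeq : g = C (φ a) * X ^ 2 + C (φ b) * X - C (φ c) := by
    rw [hgdef, hfdef]; simp
  have hgdeg : g.natDegree = 2 := by
    rw [hgeq, sub_eq_add_neg, ← C_neg]; exact natDegree_quadratic ha'0
  have hg0 : g ≠ 0 := fun h => by simp [h] at hgdeg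
  haveI : CharZero (FractionRing (Polynomial ℂ)) :=
    charZero_of_injective_algebraMap hinj
  -- roots of g correspond to square roots of Δ
  have hroot : (∃ x : FractionRing (Polynomial ℂ), g.eval x = 0) ↔
      (∃ s : FractionRing (Polynomial ℂ), φ Δ = s ^ 2) := by
    have heval : ∀ x : FractionRing (Polynomial ℂ),
        g.eval x = φ a * (x * x) + φ b * x + (-(φ c)) := by
      intro x; rw [hgeq]; simp; ring
    have hdisc : discrim (φ a) (φ b) (-(φ c)) = φ Δ := by
      rw [discrim, hΔdef]; push_cast [map_add, map_mul, map_pow, map_ofNat]; ring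
    constructor
    · rintro ⟨x, hx⟩
      rw [heval x] at hx
      exact ⟨2 * φ a * x + φ b, by rw [← hdisc]; exact discrim_eq_sq_of_quadratic_eq_zero hx⟩
    · rintro ⟨s, hs⟩
      refine ⟨(s - φ b) / (2 * φ a), ?_⟩
      rw [heval]
      rw [quadratic_eq_zero_iff_discrim_eq_sq ha'0, hdisc, hs]
      congr 1
      field_simp
      ring
  -- squares descend from K to R
  have hsqdesc : (∃ s : FractionRing (Polynomial ℂ), φ Δ = s ^ 2) ↔
      (∃ δ : Polynomial ℂ, Δ = δ ^ 2) := by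
    constructor
    · rintro ⟨s, hs⟩
      have hint : IsIntegral (Polynomial ℂ) s := by
        refine ⟨X ^ 2 - C Δ, monic_X_pow_sub_C Δ (by norm_num), ?_⟩
        simp [eval₂_sub, eval₂_pow, ← hs]
        exact sub_self _
      obtain ⟨δ, hδ⟩ := IsIntegrallyClosed.isIntegral_iff.mp hint
      exact ⟨δ, hinj (by rw [map_pow, hδ, ← hs])⟩
    · rintro ⟨δ, hδ⟩
      exact ⟨φ δ, by rw [hδ, map_pow]⟩
  -- Part (b): domain iff Δ not a square
  have hdomain : IsDomain (Polynomial (Polynomial ℂ) ⧸ Ideal.span {f}) ↔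
      ¬ ∃ δ : Polynomial ℂ, Δ = δ ^ 2 := by
    rw [Ideal.Quotient.isDomain_iff_prime, Ideal.span_singleton_prime hf0,
      ← UniqueFactorizationMonoid.irreducible_iff_prime,
      hprim.irreducible_iff_irreducible_map_fraction_map
        (K := FractionRing (Polynomial ℂ)), ← hgdef,
      irreducible_iff_roots_eq_zero_of_degree_le_three (by omega) (by omega),
      Multiset.eq_zero_iff_forall_notMem]
    simp only [mem_roots hg0, IsRoot.def]
    rw [← not_exists, hroot, hsqdesc]
  -- Part (a), direction Δ ≠ 0 → reduced
  have hred_of : Δ ≠ 0 → IsReduced (Polynomial (Polynomial ℂ) ⧸ Ideal.span {f}) := by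
    intro hΔ0
    have hΔ'0 : φ Δ ≠ 0 := fun h => hΔ0 (hinj (by rw [h, map_zero]))
    have gder : derivative g = C (2 * φ a) * X + C (φ b) := by
      rw [hgeq]
      simp only [derivative_sub, derivative_add, derivative_C_mul, derivative_X_pow,
        derivative_X, derivative_C, mul_one, sub_zero, C_mul]
      ring
    have hkeyK : (C (2 * φ a) * X + C (φ b)) ^ 2 = C (4 * φ a) * g + C (φ Δ) := by
      rw [hgeq, hΔdef]
      simp only [map_add, map_mul, map_pow, map_ofNat, C_mul, C_add, C_pow]
      ring
    have hsep : g.Separable := by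
      refine ⟨-(C (4 * φ a) * C (φ Δ)⁻¹), C (φ Δ)⁻¹ * (C (2 * φ a) * X + C (φ b)), ?_⟩
      rw [gder]
      have h1 : -(C (4 * φ a) * C (φ Δ)⁻¹) * g +
          C (φ Δ)⁻¹ * (C (2 * φ a) * X + C (φ b)) * (C (2 * φ a) * X + C (φ b)) =
          C (φ Δ)⁻¹ * ((C (2 * φ a) * X + C (φ b)) ^ 2 - C (4 * φ a) * g) := by ring
      rw [h1, hkeyK, add_sub_cancel_left, ← C_mul, inv_mul_cancel₀ hΔ'0, C_1]
    have hgsf : Squarefree g := hsep.squarefree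
    have hfsf : Squarefree f := by
      intro q hq
      by_contra hqu
      rcases Nat.eq_zero_or_pos q.natDegree with hq0 | hq1
      · have hqc : q = C (q.coeff 0) := eq_C_of_natDegree_eq_zero hq0
        have hqdvd : C (q.coeff 0) ∣ f := hqc ▸ (dvd_trans (dvd_mul_right q q) hq)
        exact hqu (hqc ▸ isUnit_C.mpr (isPrimitive_iff_isUnit_of_C_dvd.mp hprim _ hqdvd))
      · have hmap : q.map φ * q.map φ ∣ g := by
          rw [← Polynomial.map_mul]; exact Polynomial.map_dvd φ hq
        have hu := hgsf _ hmap
        have hdeg' : (q.map φ).natDegree = q.natDegree := natDegree_map_eq_of_injective hinj q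
        have := natDegree_eq_zero_of_isUnit hu
        omega
    exact (Ideal.isRadical_iff_quotient_reduced _).mp
      (isRadical_iff_span_singleton.mp hfsf.isRadical)
  -- Part (a), direction Δ = 0 → not reduced
  have hnotred : Δ = 0 → ¬ IsReduced (Polynomial (Polynomial ℂ) ⧸ Ideal.span {f}) := by
    intro hΔ0 hred
    set y := Ideal.Quotient.mk (Ideal.span {f}) (C (2*a) * X + C b) with hydef
    have hy2 : y ^ 2 = 0 := by
      rw [hydef, ← map_pow, hkeyR, hΔ0, C_0, add_zero]
      exact Ideal.Quotient.eq_zero_iff_mem.mpr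
        (Ideal.mem_span_singleton.mpr (Dvd.intro_left _ rfl))
    have hlin0 : (C (2*a) * X + C b : Polynomial (Polynomial ℂ)) ≠ 0 := by
      intro h
      have h1 : (C (2*a) * X + C b : Polynomial (Polynomial ℂ)).natDegree = 1 :=
        natDegree_linear h2a
      rw [h] at h1
      simp at h1
    have hy0 : y ≠ 0 := by
      rw [hydef, Ne, Ideal.Quotient.eq_zero_iff_mem, Ideal.mem_span_singleton]
      intro hdvd
      have hle := natDegree_le_of_dvd hdvd hlin0
      rw [hdeg, natDegree_linear h2a] at hle
      omega
    exact hy0 (IsNilpotent.eq_zero ⟨2, hy2⟩)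
  exact ⟨⟨fun hr hΔ0 => hnotred hΔ0 hr, hred_of⟩, hdomain⟩

/-- Proposition 5.3 (algebraic content): for a rank-2 Higgs field
`ψ` over `ℂ[x]` with `ψ₁₁ = 0`, `ψ₁₂ ψ₂₁ ≠ 0` and primitive entries,
setting `Δ = ψ₂₂² + 4 ψ₁₂ ψ₂₁` and `f = ψ₁₂ t² + ψ₂₂ t − ψ₂₁ ∈ ℂ[x][t]`:
(a) `ℂ[x][t]/(f)` is reduced iff `Δ ≠ 0`;
(b) `ℂ[x][t]/(f)` is an integral domain iff `Δ` is not a square in `ℂ[x]`. -/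
theorem stmt14 (ψ : Matrix (Fin 2) (Fin 2) (Polynomial ℂ))
    (h11 : ψ 0 0 = 0) (h1221 : ψ 0 1 * ψ 1 0 ≠ 0)
    (hgcd : ∀ g : Polynomial ℂ, g ∣ ψ 0 1 → g ∣ ψ 1 0 → g ∣ ψ 1 1 → IsUnit g) :
    (IsReduced (Polynomial (Polynomial ℂ) ⧸
        Ideal.span {Polynomial.C (ψ 0 1) * Polynomial.X ^ 2
          + Polynomial.C (ψ 1 1) * Polynomial.X - Polynomial.C (ψ 1 0)})
      ↔ ψ 1 1 ^ 2 + 4 * ψ 0 1 * ψ 1 0 ≠ 0) ∧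
    (IsDomain (Polynomial (Polynomial ℂ) ⧸
        Ideal.span {Polynomial.C (ψ 0 1) * Polynomial.X ^ 2
          + Polynomial.C (ψ 1 1) * Polynomial.X - Polynomial.C (ψ 1 0)})
      ↔ ¬ ∃ δ : Polynomial ℂ, ψ 1 1 ^ 2 + 4 * ψ 0 1 * ψ 1 0 = δ ^ 2) :=
  aux14 (ψ 0 1) (ψ 1 1) (ψ 1 0) (left_ne_zero_of_mul h1221) (right_ne_zero_of_mul h1221) hgcd
end

section
/- Let n ≥ 1 and, for h = 1,…,n, let φ^{(h)} ∈ Mat_{(n+1)×(n+1)}(ℂ) be the matrix whose only nonzero entry is (φ^{(h)})_{1, h+1} = 1. Then in ℂ[z₁,…,z_{n+1}] one has ∑_{h=1}^n I_{φ^{(h)}} = (z_a z_b : 2 ≤ a ≤ b ≤ n+1), and the radical of this ideal is (z₂,…,z_{n+1}). -/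
open MvPolynomial

/-- The `h`-th local matrix of the Higgs field of the Simpson system: the
`(n+1)×(n+1)` matrix whose only nonzero entry is a `1` in position `(1, h+1)`
(1-based), i.e. `(0, h+1)` 0-based. -/
def simpsonMatrix (n : ℕ) (h : Fin n) : Matrix (Fin (n + 1)) (Fin (n + 1)) ℂ :=
  Matrix.of fun a b => if a = 0 ∧ (b : ℕ) = (h : ℕ) + 1 then 1 else 0

lemma Zv_eq {R : Type*} [CommRing R] {r a : ℕ} (ha : a < r) :
    Zv R r a = X ⟨a, ha⟩ := dif_pos ha

lemma sum_gen (n : ℕ) (h : Fin n) (j : Fin (n+1)) (hj : j ≠ 0) :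
    (∑ k : Fin (n+1), X k *
      (C (simpsonMatrix n h j k) * X (0 : Fin (n+1))
        - C (simpsonMatrix n h (0 : Fin (n+1)) k) * X j))
    = -(X (⟨(h:ℕ)+1, by omega⟩ : Fin (n+1)) * X j) := by
  have hj' : (j : ℕ) ≠ 0 := by intro h0; apply hj; ext; simp [h0]
  set a : Fin (n+1) := ⟨(h:ℕ)+1, by omega⟩ with ha
  have key : ∀ k : Fin (n+1), X k *
      (C (simpsonMatrix n h j k) * X (0 : Fin (n+1))
        - C (simpsonMatrix n h (0 : Fin (n+1)) k) * X j)
      = if k = a then -(X a * X j) else 0 := by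
    intro k
    by_cases hk : k = a
    · subst hk; simp [simpsonMatrix, hj, hj', ha]
    · have hk' : (k : ℕ) ≠ (h:ℕ) + 1 := by simpa [ha, Fin.ext_iff] using hk
      simp [simpsonMatrix, hj', hk, hk']
  rw [Finset.sum_congr rfl fun k _ => key k, Finset.sum_ite_eq' Finset.univ a]
  simp

lemma sum_gen_zero (n : ℕ) (h : Fin n) (i j : Fin (n+1)) (hi : i ≠ 0) (hj : j ≠ 0) :
    (∑ k : Fin (n+1), X k *
      (C (simpsonMatrix n h j k) * X i - C (simpsonMatrix n h i k) * X j)) = 0 := by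
  simp [simpsonMatrix, hi, hj]

lemma ker_le_span (n : ℕ) (p : MvPolynomial (Fin (n+1)) ℂ)
    (hp : p ∉ Ideal.span (X '' {i : Fin (n+1) | i ≠ 0})) :
    aeval (fun i : Fin (n+1) => if i = 0 then Polynomial.X else (0 : Polynomial ℂ)) p ≠ 0 := by
  rw [mem_ideal_span_X_image] at hp
  push_neg at hp
  obtain ⟨m, hm, hm0⟩ := hp
  simp only [Set.mem_setOf_eq] at hm0
  intro h0
  have hc : Polynomial.coeff (aeval (fun i : Fin (n+1) => if i = 0 then Polynomial.X else (0 : Polynomial ℂ)) p) (m 0) = p.coeff m := by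
    rw [aeval_def, eval₂_eq]
    rw [Polynomial.finset_sum_coeff]
    have univ_prod : ∀ d : Fin (n+1) →₀ ℕ,
        (∏ i ∈ d.support, (if i = 0 then Polynomial.X else (0:Polynomial ℂ)) ^ d i)
        = ∏ i : Fin (n+1), (if i = 0 then Polynomial.X else (0:Polynomial ℂ)) ^ d i :=
      fun d => Finset.prod_subset (Finset.subset_univ _)
        (fun i _ hi => by rw [Finsupp.notMem_support_iff.mp hi, pow_zero])
    rw [Finset.sum_eq_single m]
    · have : (∏ i : Fin (n+1), (if i = 0 then Polynomial.X else (0:Polynomial ℂ)) ^ m i)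
          = Polynomial.X ^ m 0 := by
        rw [Finset.prod_eq_single_of_mem 0 (Finset.mem_univ _)]
        · simp
        · intro i _ hi
          rw [if_neg hi, hm0 i hi, pow_zero]
      rw [univ_prod, this]
      simp [Polynomial.coeff_C_mul, Polynomial.coeff_X_pow]
    · intro d hd hdm
      by_cases hds : ∀ i : Fin (n+1), i ≠ 0 → d i = 0
      · have hprod : (∏ i : Fin (n+1), (if i = 0 then Polynomial.X else (0:Polynomial ℂ)) ^ d i)
            = Polynomial.X ^ d 0 := by
          rw [Finset.prod_eq_single_of_mem 0 (Finset.mem_univ _)]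
          · simp
          · intro i _ hi
            rw [if_neg hi, hds i hi, pow_zero]
        rw [univ_prod, hprod]
        have hne : d 0 ≠ m 0 := by
          intro he
          apply hdm
          ext i
          by_cases hi : i = 0
          · subst hi; exact he
          · rw [hds i hi, hm0 i hi]
        simp [Polynomial.coeff_C_mul, Polynomial.coeff_X_pow, Ne.symm hne]
      · push_neg at hds
        obtain ⟨i, hi, hdi⟩ := hds
        have hz : (∏ i ∈ d.support, (if i = 0 then Polynomial.X else (0:Polynomial ℂ)) ^ d i) = 0 := by
          apply Finset.prod_eq_zero (Finsupp.mem_support_iff.mpr hdi)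
          rw [if_neg hi]
          exact zero_pow hdi
        rw [hz, mul_zero, Polynomial.coeff_zero]
    · intro hm'
      exact absurd hm hm'
  rw [h0, Polynomial.coeff_zero] at hc
  exact (mem_support_iff.mp hm) hc.symm

lemma span_X_prime (n : ℕ) :
    (Ideal.span (X '' {i : Fin (n+1) | i ≠ 0} :
      Set (MvPolynomial (Fin (n+1)) ℂ))).IsPrime := by
  have hker : Ideal.span (X '' {i : Fin (n+1) | i ≠ 0} : Set (MvPolynomial (Fin (n+1)) ℂ))
      = RingHom.ker (aeval (fun i : Fin (n+1) =>
          if i = 0 then Polynomial.X else (0 : Polynomial ℂ))) := by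
    apply le_antisymm
    · rw [Ideal.span_le]
      rintro p ⟨i, hi, rfl⟩
      simp only [Set.mem_setOf_eq] at hi
      simp [RingHom.mem_ker, hi]
    · intro p hp
      by_contra hns
      exact ker_le_span n p hns (RingHom.mem_ker.mp hp)
  rw [hker]
  exact RingHom.ker_isPrime _

/-- The local computation underlying Proposition 6.1(1): for the Simpson system,
`∑ₕ I_{φ⁽ʰ⁾} = (z_a z_b : 2 ≤ a ≤ b ≤ n+1)` (1-based), whose radical is
`(z₂,…,z_{n+1})`. -/
theorem stmt15 (n : ℕ) (hn : 1 ≤ n) :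
    (∑ h : Fin n, higgsIdeal (simpsonMatrix n h)) =
      Ideal.span { p | ∃ a b : ℕ, 1 ≤ a ∧ a ≤ b ∧ b ≤ n ∧
        p = Zv ℂ (n + 1) a * Zv ℂ (n + 1) b } ∧
    (Ideal.span { p : MvPolynomial (Fin (n + 1)) ℂ | ∃ a b : ℕ, 1 ≤ a ∧ a ≤ b ∧ b ≤ n ∧
        p = Zv ℂ (n + 1) a * Zv ℂ (n + 1) b }).radical =
      Ideal.span { p | ∃ a : ℕ, 1 ≤ a ∧ a ≤ n ∧ p = Zv ℂ (n + 1) a } := by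
  constructor
  · apply le_antisymm
    · rw [Ideal.sum_eq_sup]
      apply Finset.sup_le
      intro h _
      rw [higgsIdeal, Ideal.span_le]
      rintro p ⟨i, j, hij, rfl⟩
      have hj : j ≠ 0 := (lt_of_le_of_lt (Fin.zero_le i) hij).ne'
      by_cases hi : i = 0
      · subst hi
        rw [sum_gen n h j hj]
        apply neg_mem
        have hj1 : 1 ≤ (j : ℕ) := by
          have := Fin.pos_iff_ne_zero.mpr hj
          omega
        by_cases hle : (h : ℕ) + 1 ≤ (j : ℕ)
        · apply Ideal.subset_span
          refine ⟨(h:ℕ)+1, (j:ℕ), by omega, hle, by omega, ?_⟩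
          rw [Zv_eq (show (h:ℕ)+1 < n+1 by omega), Zv_eq j.isLt]
        · apply Ideal.subset_span
          refine ⟨(j:ℕ), (h:ℕ)+1, hj1, by omega, by omega, ?_⟩
          rw [Zv_eq j.isLt, Zv_eq (show (h:ℕ)+1 < n+1 by omega), mul_comm]
      · rw [sum_gen_zero n h i j hi hj]
        exact Submodule.zero_mem _
    · rw [Ideal.span_le]
      rintro p ⟨a, b, ha1, hab, hbn, rfl⟩
      have har : a < n + 1 := by omega
      have hbr : b < n + 1 := by omega
      rw [Zv_eq har, Zv_eq hbr]
      set h : Fin n := ⟨a - 1, by omega⟩ with hh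
      have hsum : higgsIdeal (simpsonMatrix n h) ≤ ∑ h : Fin n, higgsIdeal (simpsonMatrix n h) := by
        rw [Ideal.sum_eq_sup]
        exact Finset.le_sup (f := fun h => higgsIdeal (simpsonMatrix n h)) (Finset.mem_univ h)
      apply hsum
      have hb0 : (⟨b, hbr⟩ : Fin (n+1)) ≠ 0 := by
        simp only [ne_eq, Fin.ext_iff, Fin.val_zero]
        omega
      have hgen : (∑ k : Fin (n+1), X k *
          (C (simpsonMatrix n h (⟨b, hbr⟩ : Fin (n+1)) k) * X (0 : Fin (n+1))
            - C (simpsonMatrix n h (0 : Fin (n+1)) k) * X (⟨b, hbr⟩ : Fin (n+1))))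
          ∈ higgsIdeal (simpsonMatrix n h) := by
        apply Ideal.subset_span
        exact ⟨0, ⟨b, hbr⟩, by simp [Fin.lt_def]; omega, rfl⟩
      rw [sum_gen n h _ hb0] at hgen
      have e : (⟨(h:ℕ)+1, by omega⟩ : Fin (n+1)) = ⟨a, har⟩ := by
        apply Fin.ext
        show (h:ℕ) + 1 = a
        simp [hh]
        omega
      rw [e] at hgen
      exact neg_mem_iff.mp hgen
  · have hLset : { p : MvPolynomial (Fin (n + 1)) ℂ | ∃ a : ℕ, 1 ≤ a ∧ a ≤ n ∧ p = Zv ℂ (n + 1) a }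
        = X '' {i : Fin (n+1) | i ≠ 0} := by
      ext p
      constructor
      · rintro ⟨a, ha1, han, rfl⟩
        refine ⟨⟨a, by omega⟩, ?_, (Zv_eq (by omega)).symm⟩
        simp only [Set.mem_setOf_eq, ne_eq, Fin.ext_iff, Fin.val_zero]
        omega
      · rintro ⟨i, hi, rfl⟩
        simp only [Set.mem_setOf_eq] at hi
        have hi1 : 1 ≤ (i : ℕ) := by
          have := Fin.pos_iff_ne_zero.mpr hi
          omega
        exact ⟨(i : ℕ), hi1, by omega, by rw [Zv_eq i.isLt]⟩
    apply le_antisymm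
    · have hJL : Ideal.span { p : MvPolynomial (Fin (n + 1)) ℂ | ∃ a b : ℕ, 1 ≤ a ∧ a ≤ b ∧ b ≤ n ∧
          p = Zv ℂ (n + 1) a * Zv ℂ (n + 1) b }
          ≤ Ideal.span { p : MvPolynomial (Fin (n + 1)) ℂ | ∃ a : ℕ, 1 ≤ a ∧ a ≤ n ∧ p = Zv ℂ (n + 1) a } := by
        rw [Ideal.span_le]
        rintro p ⟨a, b, ha1, hab, hbn, rfl⟩
        exact Ideal.mul_mem_left _ _ (Ideal.subset_span ⟨b, by omega, hbn, rfl⟩)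
      have := Ideal.radical_mono hJL
      rwa [hLset, (span_X_prime n).radical, ← hLset] at this
    · rw [Ideal.span_le]
      rintro p ⟨a, ha1, han, rfl⟩
      exact Ideal.mem_radical_iff.mpr ⟨2, by
        rw [pow_two]
        exact Ideal.subset_span ⟨a, a, ha1, le_refl a, han, rfl⟩⟩
end

section
/- Let n ≥ 2 and work in the polynomial ring ℂ[x₁,…,x_n, z₁,…,z_n]. Let I be the ideal generated by the monomials x_i z_i z_j for all pairs i ≠ j in {1,…,n}. Then I = ⋂_{i=1}^n (z_j : j ≠ i) ∩ ⋂_{P ⊆ {1,…,n}, |P| ≥ 2} ( (x_i : i ∈ P) + (z_i : i ∈ P^c) ), where P^c denotes the complement of P in {1,…,n}. In particular I is a radical ideal and has exactly 2^n − 1 minimal primes. -/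
open MvPolynomial

/-- The ideal of `ℂ[x₁,…,x_n,z₁,…,z_n]` generated by the monomials `x_i z_i z_j`
for all pairs `i ≠ j`; the variables `x_i` are indexed by `Sum.inl i` and `z_i`
by `Sum.inr i`. -/
noncomputable def diagHiggsIdeal (n : ℕ) : Ideal (MvPolynomial (Fin n ⊕ Fin n) ℂ) :=
  Ideal.span { p | ∃ i j : Fin n, i ≠ j ∧
    p = X (Sum.inl i) * X (Sum.inr i) * X (Sum.inr j) }

namespace DiagHiggsAux

set_option linter.unusedSectionVars false

lemma tri_le_iff {σ : Type*} {a b c : σ} (hab : a ≠ b) (hbc : b ≠ c) (hac : a ≠ c)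
    (m : σ →₀ ℕ) :
    Finsupp.single a 1 + Finsupp.single b 1 + Finsupp.single c 1 ≤ m ↔
      m a ≠ 0 ∧ m b ≠ 0 ∧ m c ≠ 0 := by
  classical
  rw [Finsupp.le_def]
  constructor
  · intro h
    refine ⟨?_, ?_, ?_⟩
    · have := h a
      rw [Finsupp.add_apply, Finsupp.add_apply, Finsupp.single_eq_same,
        Finsupp.single_eq_of_ne' hab.symm, Finsupp.single_eq_of_ne' hac.symm] at this
      omega
    · have := h b
      rw [Finsupp.add_apply, Finsupp.add_apply, Finsupp.single_eq_same,
        Finsupp.single_eq_of_ne' hab, Finsupp.single_eq_of_ne' hbc.symm] at this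
      omega
    · have := h c
      rw [Finsupp.add_apply, Finsupp.add_apply, Finsupp.single_eq_same,
        Finsupp.single_eq_of_ne' hac, Finsupp.single_eq_of_ne' hbc] at this
      omega
  · rintro ⟨ha, hb, hc⟩ x
    rw [Finsupp.add_apply, Finsupp.add_apply]
    by_cases h1 : a = x
    · subst h1
      rw [Finsupp.single_eq_same, Finsupp.single_eq_of_ne' hab.symm,
        Finsupp.single_eq_of_ne' hac.symm]
      omega
    · rw [Finsupp.single_eq_of_ne' h1]
      by_cases h2 : b = x
      · subst h2
        rw [Finsupp.single_eq_same, Finsupp.single_eq_of_ne' hbc.symm]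
        omega
      · rw [Finsupp.single_eq_of_ne' h2]
        by_cases h3 : c = x
        · subst h3
          rw [Finsupp.single_eq_same]
          omega
        · rw [Finsupp.single_eq_of_ne' h3]
          omega



/-! ### Generic lemmas about ideals spanned by variables -/

section Generic
variable {σ K : Type*} [CommRing K] [IsDomain K]

open Classical in
lemma coeff_aeval_subst (s : Set σ) (m : σ →₀ ℕ) (hm : ∀ i ∈ s, m i = 0)
    (p : MvPolynomial σ K) :
    coeff m (aeval (fun i => if i ∈ s then 0 else X i) p) = coeff m p := by
  induction p using MvPolynomial.induction_on' with
  | monomial d c =>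
    rw [aeval_monomial]
    by_cases hd : ∀ i ∈ s, d i = 0
    · have : (d.prod fun i k => (if i ∈ s then (0:MvPolynomial σ K) else X i) ^ k)
          = monomial d 1 := by
        rw [monomial_eq]
        simp only [C_1, one_mul]
        refine Finsupp.prod_congr fun i hi => ?_
        rw [if_neg]
        intro his
        exact (Finsupp.mem_support_iff.mp hi) (hd i his)
      rw [this]
      simp [monomial_eq, algebraMap_eq]
    · push_neg at hd
      obtain ⟨i, his, hdi⟩ := hd
      have : (d.prod fun i k => (if i ∈ s then (0:MvPolynomial σ K) else X i) ^ k) = 0 := by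
        apply Finset.prod_eq_zero (Finsupp.mem_support_iff.mpr hdi)
        simp only [if_pos his]
        exact zero_pow hdi
      rw [this, mul_zero]
      rw [coeff_monomial, if_neg, coeff_zero]
      intro h
      exact hdi (h ▸ hm i his)
  | add p q hp hq => rw [map_add, coeff_add, hp, hq, coeff_add]

open Classical in
lemma span_X_image_eq_ker (s : Set σ) :
    Ideal.span (X '' s : Set (MvPolynomial σ K)) =
      RingHom.ker ((aeval (fun i => if i ∈ s then 0 else X i) :
        MvPolynomial σ K →ₐ[K] MvPolynomial σ K) : MvPolynomial σ K →+* MvPolynomial σ K) := by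
  apply le_antisymm
  · rw [Ideal.span_le]
    rintro _ ⟨i, his, rfl⟩
    simp [RingHom.mem_ker, if_pos his]
  · intro p hp
    have hp' : (aeval (fun i => if i ∈ s then 0 else X i)) p = (0 : MvPolynomial σ K) := hp
    rw [mem_ideal_span_X_image]
    intro m hm
    by_contra h
    push_neg at h
    have := coeff_aeval_subst s m h p
    rw [hp', coeff_zero] at this
    exact (mem_support_iff.mp hm) this.symm

lemma isPrime_span_X_image (s : Set σ) :
    (Ideal.span (X '' s : Set (MvPolynomial σ K))).IsPrime := by
  rw [span_X_image_eq_ker]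
  exact RingHom.ker_isPrime _

lemma X_mem_span_X_image {s : Set σ} {a : σ} :
    (X a : MvPolynomial σ K) ∈ Ideal.span (X '' s) ↔ a ∈ s := by
  rw [mem_ideal_span_X_image]
  constructor
  · intro h
    obtain ⟨i, his, hi⟩ := h (Finsupp.single a 1) (by simp [support_X])
    rcases eq_or_ne a i with rfl | hne
    · exact his
    · classical
      rw [Finsupp.single_apply, if_neg hne] at hi
      exact absurd rfl hi
  · intro ha m hm
    rw [support_X, Finset.mem_singleton] at hm
    exact ⟨a, ha, by simp [hm]⟩

lemma X_mul_X_mul_X (a b c : σ) :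
    (X a * X b * X c : MvPolynomial σ K) =
      monomial (Finsupp.single a 1 + Finsupp.single b 1 + Finsupp.single c 1) 1 := by
  simp only [X, monomial_mul, one_mul]

end Generic

/-! ### The horizontal and vertical primes -/

variable {n : ℕ}

/-- Horizontal prime: `(z_j : j ≠ k)`. -/
noncomputable def Hid (n : ℕ) (k : Fin n) : Ideal (MvPolynomial (Fin n ⊕ Fin n) ℂ) :=
  Ideal.span (X '' (Sum.inr '' {j | j ≠ k}))

/-- Vertical prime: `(x_i : i ∈ P) + (z_i : i ∉ P)`. -/
noncomputable def Vid (n : ℕ) (P : Finset (Fin n)) : Ideal (MvPolynomial (Fin n ⊕ Fin n) ℂ) :=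
  Ideal.span (X '' (Sum.inl '' (P : Set (Fin n)) ∪ Sum.inr '' ((P : Set (Fin n)))ᶜ))

lemma Hid_isPrime (k : Fin n) : (Hid n k).IsPrime := isPrime_span_X_image _

lemma Vid_isPrime (P : Finset (Fin n)) : (Vid n P).IsPrime := isPrime_span_X_image _

lemma mem_Hid_iff {k : Fin n} {p : MvPolynomial (Fin n ⊕ Fin n) ℂ} :
    p ∈ Hid n k ↔ ∀ m ∈ p.support, ∃ j : Fin n, j ≠ k ∧ m (Sum.inr j) ≠ 0 := by
  rw [Hid, mem_ideal_span_X_image]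
  refine forall₂_congr fun m hm => ?_
  constructor
  · rintro ⟨a, ⟨j, hj, rfl⟩, hma⟩
    exact ⟨j, hj, hma⟩
  · rintro ⟨j, hj, hmj⟩
    exact ⟨Sum.inr j, ⟨j, hj, rfl⟩, hmj⟩

lemma mem_Vid_iff {P : Finset (Fin n)} {p : MvPolynomial (Fin n ⊕ Fin n) ℂ} :
    p ∈ Vid n P ↔ ∀ m ∈ p.support,
      (∃ i ∈ P, m (Sum.inl i) ≠ 0) ∨ ∃ i ∉ P, m (Sum.inr i) ≠ 0 := by
  rw [Vid, mem_ideal_span_X_image]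
  refine forall₂_congr fun m hm => ?_
  constructor
  · rintro ⟨a, (⟨i, hi, rfl⟩ | ⟨i, hi, rfl⟩), hma⟩
    · exact Or.inl ⟨i, hi, hma⟩
    · exact Or.inr ⟨i, hi, hma⟩
  · rintro (⟨i, hi, hmi⟩ | ⟨i, hi, hmi⟩)
    · exact ⟨Sum.inl i, Or.inl ⟨i, hi, rfl⟩, hmi⟩
    · exact ⟨Sum.inr i, Or.inr ⟨i, hi, rfl⟩, hmi⟩

lemma X_inl_mem_Vid {P : Finset (Fin n)} {i : Fin n} :
    X (Sum.inl i) ∈ Vid n P ↔ i ∈ P := by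
  rw [Vid, X_mem_span_X_image]
  simp

lemma X_inr_mem_Vid {P : Finset (Fin n)} {i : Fin n} :
    X (Sum.inr i) ∈ Vid n P ↔ i ∉ P := by
  rw [Vid, X_mem_span_X_image]
  simp

lemma X_inr_mem_Hid {k j : Fin n} : X (Sum.inr j) ∈ Hid n k ↔ j ≠ k := by
  rw [Hid, X_mem_span_X_image]
  simp

lemma X_inl_not_mem_Hid {k i : Fin n} : X (Sum.inl i) ∉ Hid n k := by
  rw [Hid, X_mem_span_X_image]
  simp

/-- Membership in the Higgs ideal as a condition on supports. -/
lemma mem_diagHiggsIdeal_iff {p : MvPolynomial (Fin n ⊕ Fin n) ℂ} :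
    p ∈ diagHiggsIdeal n ↔ ∀ m ∈ p.support, ∃ i j : Fin n, i ≠ j ∧
      m (Sum.inl i) ≠ 0 ∧ m (Sum.inr i) ≠ 0 ∧ m (Sum.inr j) ≠ 0 := by
  have hset : { q : MvPolynomial (Fin n ⊕ Fin n) ℂ | ∃ i j : Fin n, i ≠ j ∧
      q = X (Sum.inl i) * X (Sum.inr i) * X (Sum.inr j) } =
      (fun d => monomial d (1:ℂ)) '' { d | ∃ i j : Fin n, i ≠ j ∧
        d = Finsupp.single (Sum.inl i) 1 + Finsupp.single (Sum.inr i) 1 +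
          Finsupp.single (Sum.inr j) 1 } := by
    ext q
    constructor
    · rintro ⟨i, j, hij, rfl⟩
      exact ⟨_, ⟨i, j, hij, rfl⟩, (X_mul_X_mul_X _ _ _).symm⟩
    · rintro ⟨d, ⟨i, j, hij, rfl⟩, rfl⟩
      exact ⟨i, j, hij, (X_mul_X_mul_X (K := ℂ) _ _ _).symm⟩
  rw [diagHiggsIdeal, hset, mem_ideal_span_monomial_image]
  refine forall₂_congr fun m hm => ?_
  constructor
  · rintro ⟨d, ⟨i, j, hij, rfl⟩, hle⟩
    rw [tri_le_iff (by simp) (fun h => hij (Sum.inr.inj h)) (by simp)] at hle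
    exact ⟨i, j, hij, hle.1, hle.2.1, hle.2.2⟩
  · rintro ⟨i, j, hij, h1, h2, h3⟩
    exact ⟨_, ⟨i, j, hij, rfl⟩,
      (tri_le_iff (by simp) (fun h => hij (Sum.inr.inj h)) (by simp) m).mpr ⟨h1, h2, h3⟩⟩

/-- The key combinatorial fact for a single monomial. -/
lemma combo (hn : 2 ≤ n) (m : (Fin n ⊕ Fin n) →₀ ℕ)
    (h1 : ∀ k : Fin n, ∃ j : Fin n, j ≠ k ∧ m (Sum.inr j) ≠ 0)
    (h2 : ∀ P : Finset (Fin n), 2 ≤ P.card →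
      (∃ i ∈ P, m (Sum.inl i) ≠ 0) ∨ ∃ i ∉ P, m (Sum.inr i) ≠ 0) :
    ∃ i j : Fin n, i ≠ j ∧ m (Sum.inl i) ≠ 0 ∧ m (Sum.inr i) ≠ 0 ∧ m (Sum.inr j) ≠ 0 := by
  classical
  obtain ⟨j1, _, hz1⟩ := h1 ⟨0, by omega⟩
  obtain ⟨j2, hne, hz2⟩ := h1 j1
  set Z : Finset (Fin n) := Finset.univ.filter fun j => m (Sum.inr j) ≠ 0 with hZ
  have hj1 : j1 ∈ Z := by simp [hZ, hz1]
  have hj2 : j2 ∈ Z := by simp [hZ, hz2]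
  have hcard : 2 ≤ Z.card := Finset.one_lt_card.mpr ⟨j2, hj2, j1, hj1, hne⟩
  rcases h2 Z hcard with ⟨i, hiZ, hxi⟩ | ⟨i, hiZ, hzi⟩
  · have hzi : m (Sum.inr i) ≠ 0 := by simpa [hZ] using hiZ
    rcases eq_or_ne i j1 with rfl | hij1
    · exact ⟨i, j2, fun h => hne (h.symm), hxi, hzi, hz2⟩
    · exact ⟨i, j1, hij1, hxi, hzi, hz1⟩
  · exact absurd (by simp [hZ, hzi]) hiZ


/-! ### The decomposition -/

lemma decomp (hn : 2 ≤ n) :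
    diagHiggsIdeal n = (⨅ k : Fin n, Hid n k) ⊓
      (⨅ P ∈ {P : Finset (Fin n) | 2 ≤ P.card}, Vid n P) := by
  ext p
  rw [Ideal.mem_inf, mem_diagHiggsIdeal_iff]
  simp only [Ideal.mem_iInf, Set.mem_setOf_eq]
  constructor
  · intro h
    constructor
    · intro k
      rw [mem_Hid_iff]
      intro m hm
      obtain ⟨i, j, hij, h1, h2, h3⟩ := h m hm
      rcases eq_or_ne i k with rfl | hik
      · exact ⟨j, fun hh => hij hh.symm, h3⟩
      · exact ⟨i, hik, h2⟩
    · intro P hP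
      rw [mem_Vid_iff]
      intro m hm
      obtain ⟨i, j, hij, h1, h2, h3⟩ := h m hm
      by_cases hiP : i ∈ P
      · exact Or.inl ⟨i, hiP, h1⟩
      · exact Or.inr ⟨i, hiP, h2⟩
  · rintro ⟨hH, hV⟩ m hm
    exact combo hn m (fun k => mem_Hid_iff.mp (hH k) m hm)
      (fun P hP => mem_Vid_iff.mp (hV P hP) m hm)

lemma radical_eq (hn : 2 ≤ n) :
    (diagHiggsIdeal n).radical = diagHiggsIdeal n := by
  refine le_antisymm ?_ Ideal.le_radical
  rw [decomp hn]
  refine le_inf (le_iInf fun k => ?_) (le_iInf fun P => le_iInf fun hP => ?_)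
  · calc _ ≤ (Hid n k).radical :=
        Ideal.radical_mono (le_trans inf_le_left (iInf_le _ k))
      _ = Hid n k := (Hid_isPrime k).radical
  · calc _ ≤ (Vid n P).radical :=
        Ideal.radical_mono (le_trans inf_le_right
          (le_trans (iInf_le _ P) (iInf_le _ hP)))
      _ = Vid n P := (Vid_isPrime P).radical

/-! ### Non-containments -/

lemma Hid_le_Hid {k l : Fin n} (h : Hid n k ≤ Hid n l) : k = l := by
  by_contra hne
  exact (X_inr_mem_Hid.mp (h (X_inr_mem_Hid.mpr (Ne.symm hne)))) rfl

lemma not_Hid_le_Vid {k : Fin n} {P : Finset (Fin n)} (hP : 2 ≤ P.card) :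
    ¬ Hid n k ≤ Vid n P := by
  intro h
  obtain ⟨a, ha, b, hb, hab⟩ := Finset.one_lt_card.mp hP
  rcases eq_or_ne a k with rfl | hak
  · exact X_inr_mem_Vid.mp (h (X_inr_mem_Hid.mpr (Ne.symm hab))) hb
  · exact X_inr_mem_Vid.mp (h (X_inr_mem_Hid.mpr hak)) ha

lemma not_Vid_le_Hid {k : Fin n} {P : Finset (Fin n)} (hP : 2 ≤ P.card) :
    ¬ Vid n P ≤ Hid n k := by
  intro h
  obtain ⟨i, hi⟩ := Finset.card_pos.mp (lt_of_lt_of_le (by norm_num) hP)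
  exact X_inl_not_mem_Hid (h (X_inl_mem_Vid.mpr hi))

lemma Vid_le_Vid {P Q : Finset (Fin n)} (h : Vid n P ≤ Vid n Q) : P = Q := by
  apply Finset.Subset.antisymm
  · intro i hi
    exact X_inl_mem_Vid.mp (h (X_inl_mem_Vid.mpr hi))
  · intro i hi
    by_contra hiP
    exact X_inr_mem_Vid.mp (h (X_inr_mem_Vid.mpr hiP)) hi

/-! ### The finite family of primes -/

open Classical in
noncomputable def Fprimes (n : ℕ) : Finset (Ideal (MvPolynomial (Fin n ⊕ Fin n) ℂ)) :=
  (Finset.univ.image (Hid n)) ∪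
    ((Finset.univ.filter fun P : Finset (Fin n) => 2 ≤ P.card).image (Vid n))

lemma mem_Fprimes {J : Ideal (MvPolynomial (Fin n ⊕ Fin n) ℂ)} :
    J ∈ Fprimes n ↔ (∃ k, J = Hid n k) ∨
      ∃ P : Finset (Fin n), 2 ≤ P.card ∧ J = Vid n P := by
  simp [Fprimes, eq_comm, and_comm]

lemma Fprimes_isPrime {J : Ideal (MvPolynomial (Fin n ⊕ Fin n) ℂ)}
    (hJ : J ∈ Fprimes n) : J.IsPrime := by
  rcases mem_Fprimes.mp hJ with ⟨k, rfl⟩ | ⟨P, hP, rfl⟩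
  · exact Hid_isPrime k
  · exact Vid_isPrime P

lemma Fprimes_antichain {J K : Ideal (MvPolynomial (Fin n ⊕ Fin n) ℂ)}
    (hJ : J ∈ Fprimes n) (hK : K ∈ Fprimes n) (h : J ≤ K) : J = K := by
  rcases mem_Fprimes.mp hJ with ⟨k, rfl⟩ | ⟨P, hP, rfl⟩ <;>
    rcases mem_Fprimes.mp hK with ⟨l, rfl⟩ | ⟨Q, hQ, rfl⟩
  · rw [Hid_le_Hid h]
  · exact absurd h (not_Hid_le_Vid hQ)
  · exact absurd h (not_Vid_le_Hid hP)
  · rw [Vid_le_Vid h]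

lemma inf_Fprimes (hn : 2 ≤ n) : (Fprimes n).inf id = diagHiggsIdeal n := by
  classical
  rw [decomp hn, Fprimes, Finset.inf_union]
  congr 1
  · rw [Finset.inf_image, Finset.inf_eq_iInf]
    exact iInf_congr fun k => by simp
  · rw [Finset.inf_image, Finset.inf_eq_iInf]
    refine iInf_congr fun P => ?_
    simp [Finset.mem_filter]

lemma minPrimes (hn : 2 ≤ n) :
    (diagHiggsIdeal n).minimalPrimes = ↑(Fprimes n) := by
  ext Q
  constructor
  · rintro ⟨⟨hQp, hIQ⟩, hmin⟩
    have hinf : (Fprimes n).inf id ≤ Q := by rw [inf_Fprimes hn]; exact hIQ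
    obtain ⟨M, hM, hMQ⟩ := (Ideal.IsPrime.inf_le' hQp).mp hinf
    have hQM : Q ≤ M := hmin ⟨Fprimes_isPrime hM,
      by rw [← inf_Fprimes hn]; exact Finset.inf_le hM⟩ hMQ
    have : Q = M := le_antisymm hQM hMQ
    rw [this]
    exact hM
  · intro hQ
    rw [Finset.mem_coe] at hQ
    refine ⟨⟨Fprimes_isPrime hQ, by rw [← inf_Fprimes hn]; exact Finset.inf_le hQ⟩, ?_⟩
    rintro J ⟨hJp, hIJ⟩ hJQ
    obtain ⟨M, hM, hMJ⟩ := (Ideal.IsPrime.inf_le' hJp).mp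
      (by rw [inf_Fprimes hn]; exact hIJ)
    have : M = Q := Fprimes_antichain hM hQ (hMJ.trans hJQ)
    exact this ▸ hMJ

lemma card_Fprimes (hn : 2 ≤ n) : (Fprimes n).card = 2 ^ n - 1 := by
  classical
  have hdisj : Disjoint (Finset.univ.image (Hid n))
      ((Finset.univ.filter fun P : Finset (Fin n) => 2 ≤ P.card).image (Vid n)) := by
    rw [Finset.disjoint_left]
    rintro J hJ1 hJ2
    obtain ⟨k, -, rfl⟩ := Finset.mem_image.mp hJ1
    obtain ⟨P, hP, hPe⟩ := Finset.mem_image.mp hJ2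
    rw [Finset.mem_filter] at hP
    exact not_Hid_le_Vid hP.2 (le_of_eq hPe.symm)
  have hHcard : (Finset.univ.image (Hid n)).card = n := by
    rw [Finset.card_image_of_injective _ (fun a b h => Hid_le_Hid (le_of_eq h)),
      Finset.card_univ, Fintype.card_fin]
  have hTc : (Finset.univ.filter fun P : Finset (Fin n) => ¬ 2 ≤ P.card) =
      insert ∅ (Finset.univ.image fun i : Fin n => ({i} : Finset (Fin n))) := by
    ext P
    simp only [Finset.mem_filter, Finset.mem_univ, true_and, Finset.mem_insert,
      Finset.mem_image, not_le]
    constructor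
    · intro h
      have : P.card = 0 ∨ P.card = 1 := by omega
      rcases this with h0 | h1
      · exact Or.inl (Finset.card_eq_zero.mp h0)
      · obtain ⟨a, rfl⟩ := Finset.card_eq_one.mp h1
        exact Or.inr ⟨a, rfl⟩
    · rintro (rfl | ⟨i, -, rfl⟩) <;> simp
  have hTc_card : (Finset.univ.filter fun P : Finset (Fin n) => ¬ 2 ≤ P.card).card
      = n + 1 := by
    rw [hTc, Finset.card_insert_of_notMem (by simp only [Finset.mem_image]; rintro ⟨i, -, h⟩; exact (Finset.singleton_ne_empty i) h),
      Finset.card_image_of_injective _ Finset.singleton_injective,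
      Finset.card_univ, Fintype.card_fin]
  have htot := Finset.card_filter_add_card_filter_not
    (s := (Finset.univ : Finset (Finset (Fin n)))) (p := fun P => 2 ≤ P.card)
  rw [Finset.card_univ, Fintype.card_finset, Fintype.card_fin, hTc_card] at htot
  have hVcard : ((Finset.univ.filter fun P : Finset (Fin n) => 2 ≤ P.card).image
      (Vid n)).card = 2 ^ n - (n + 1) := by
    rw [Finset.card_image_of_injective _ (fun a b h => Vid_le_Vid (le_of_eq h))]
    omega
  have hpow : n + 1 ≤ 2 ^ n := by
    have := Nat.lt_two_pow_self (n := n)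
    have h2 : n + 1 < 2 ^ (n + 1) := Nat.lt_two_pow_self (n := n + 1)
    calc n + 1 ≤ 2 * n := by omega
      _ ≤ 2 ^ n := by
        clear * - hn
        induction n with
        | zero => omega
        | succ m ih =>
          rcases Nat.lt_or_ge m 2 with hm | hm
          · interval_cases m <;> simp [pow_succ] <;> omega
          · have := ih (by omega)
            rw [pow_succ]
            omega
  rw [Fprimes, Finset.card_union_of_disjoint hdisj, hHcard, hVcard]
  omega

end DiagHiggsAux

open DiagHiggsAux in
/-- The minimal-prime decomposition of the ideal of the rank-1 Higgs Grassmannian of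
the diagonal Higgs field `diag(x₁dx₁,…,x_ndx_n)` on affine `n`-space: it is the
intersection of the `n` "horizontal" primes `(z_j : j ≠ i)` and the "vertical" primes
`(x_i : i ∈ P) + (z_i : i ∈ Pᶜ)` for all subsets `P` with at least two elements; in
particular the ideal is radical and has exactly `2ⁿ − 1` minimal primes. -/
theorem stmt16 (n : ℕ) (hn : 2 ≤ n) :
    diagHiggsIdeal n =
      (⨅ i : Fin n,
        Ideal.span { p : MvPolynomial (Fin n ⊕ Fin n) ℂ | ∃ j : Fin n, j ≠ i ∧
          p = X (Sum.inr j) }) ⊓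
      (⨅ P ∈ {P : Finset (Fin n) | 2 ≤ P.card},
        Ideal.span { p : MvPolynomial (Fin n ⊕ Fin n) ℂ | ∃ i ∈ P, p = X (Sum.inl i) } +
        Ideal.span { p : MvPolynomial (Fin n ⊕ Fin n) ℂ | ∃ i ∉ P, p = X (Sum.inr i) }) ∧
    (diagHiggsIdeal n).radical = diagHiggsIdeal n ∧
    (diagHiggsIdeal n).minimalPrimes.ncard = 2 ^ n - 1 := by
  have hHset : ∀ i : Fin n,
      Ideal.span { p : MvPolynomial (Fin n ⊕ Fin n) ℂ | ∃ j : Fin n, j ≠ i ∧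
        p = X (Sum.inr j) } = Hid n i := by
    intro i
    rw [Hid]
    congr 1
    ext q
    constructor
    · rintro ⟨j, hj, rfl⟩
      exact ⟨_, ⟨j, hj, rfl⟩, rfl⟩
    · rintro ⟨_, ⟨j, hj, rfl⟩, rfl⟩
      exact ⟨j, hj, rfl⟩
  have hVset : ∀ P : Finset (Fin n),
      Ideal.span { p : MvPolynomial (Fin n ⊕ Fin n) ℂ | ∃ i ∈ P, p = X (Sum.inl i) } +
        Ideal.span { p : MvPolynomial (Fin n ⊕ Fin n) ℂ | ∃ i ∉ P, p = X (Sum.inr i) }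
        = Vid n P := by
    intro P
    rw [Vid, Submodule.add_eq_sup, ← Ideal.span_union]
    congr 1
    ext q
    constructor
    · rintro (⟨i, hi, rfl⟩ | ⟨i, hi, rfl⟩)
      · exact ⟨_, Or.inl ⟨i, hi, rfl⟩, rfl⟩
      · exact ⟨_, Or.inr ⟨i, hi, rfl⟩, rfl⟩
    · rintro ⟨_, (⟨i, hi, rfl⟩ | ⟨i, hi, rfl⟩), rfl⟩
      · exact Or.inl ⟨i, hi, rfl⟩
      · exact Or.inr ⟨i, hi, rfl⟩
  refine ⟨?_, radical_eq hn, ?_⟩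
  · rw [decomp hn]
    exact congrArg₂ (· ⊓ ·) (iInf_congr fun i => (hHset i).symm)
      (iInf_congr fun P => iInf_congr fun _ => (hVset P).symm)
  · rw [minPrimes hn, Set.ncard_coe_finset, card_Fprimes hn]
end
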